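/- arXiv:2512.24357 — 7 statements merged into one kernel-verified Lean document; each statement's English description precedes it below -/
import Mathlib

section
/- Let k be a field, A an associative unital k-algebra with Jacobson radical J, and φ a k-algebra automorphism of A such that φ(x) − x ∈ J² for every x ∈ J. Then for every j ≥ 1 and every x ∈ J, the j-fold composite of the k-linear endomorphism x ↦ φ(x) − x of A sends x into J^{j+1}. In particular, if J^m = 0 for some m ≥ 2, then the (m−1)-fold composite of φ − id vanishes identically on J. -/
/-- unipotence of `Ker Φ_A`, paper's Proposition 4.12. Let `k` be a field, `A`
an associative unital `k`-algebra with Jacobson radical `J`, and `φ` a `k`-algebra automorphism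
of `A` with `φ x - x ∈ J²` for all `x ∈ J`.  Then for every `j ≥ 1` the `j`-fold iterate of
`x ↦ φ x - x` maps `J` into `J^(j+1)`; in particular if `J^m = 0` (`m ≥ 2`) then the
`(m-1)`-fold iterate of `φ - id` vanishes on `J`. -/
theorem stmt_1 (k A : Type*) [Field k] [Ring A] [Algebra k A]
    (J : Submodule k A)
    (hJ : J = Submodule.restrictScalars k ((⊥ : Ideal A).jacobson))
    (φ : A ≃ₐ[k] A)
    (hφ : ∀ x ∈ J, φ x - x ∈ J ^ 2) :
    (∀ j : ℕ, 1 ≤ j → ∀ x ∈ J, (fun y => φ y - y)^[j] x ∈ J ^ (j + 1)) ∧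
    (∀ m : ℕ, 2 ≤ m → J ^ m = ⊥ → ∀ x ∈ J, (fun y => φ y - y)^[m - 1] x = 0) := by
  have hJJ : J * J ≤ J := by
    rw [hJ]
    refine Submodule.mul_le.mpr fun a ha b hb => ?_
    exact Ideal.mul_mem_left _ a hb
  have hmono : ∀ n : ℕ, J ^ (n + 1) ≤ J := by
    intro n
    induction n with
    | zero => simp
    | succ n ih =>
      rw [pow_succ]
      calc J ^ (n + 1) * J ≤ J * J := mul_le_mul' ih le_rfl
        _ ≤ J := hJJ
  have hφJ : ∀ b ∈ J, φ b ∈ J := by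
    intro b hb
    have h1 : φ b - b ∈ J ^ 2 := hφ b hb
    have h2 : φ b - b ∈ J := hmono 1 h1
    have := J.add_mem h2 hb
    simpa using this
  -- key lemma
  have key : ∀ n : ℕ, ∀ y ∈ J ^ (n + 1), φ y - y ∈ J ^ (n + 2) := by
    intro n
    induction n with
    | zero => simpa using hφ
    | succ n ih =>
      intro y hy
      rw [pow_succ] at hy
      refine Submodule.mul_induction_on hy ?_ ?_
      · intro a ha b hb
        have h1 : (φ a - a) * φ b ∈ J ^ (n + 1 + 2) := by
          rw [pow_succ]
          exact Submodule.mul_mem_mul (ih a ha) (hφJ b hb)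
        have h2 : a * (φ b - b) ∈ J ^ (n + 1 + 2) := by
          have : J ^ (n + 1 + 2) = J ^ (n + 1) * J ^ 2 := by rw [pow_add]
          rw [this]
          exact Submodule.mul_mem_mul ha (hφ b hb)
        have heq : φ (a * b) - a * b = (φ a - a) * φ b + a * (φ b - b) := by
          rw [map_mul]; noncomm_ring
        rw [heq]
        exact Submodule.add_mem _ h1 h2
      · intro x y hx hy
        have heq : φ (x + y) - (x + y) = (φ x - x) + (φ y - y) := by
          rw [map_add]; abel
        rw [heq]
        exact Submodule.add_mem _ hx hy
  have main : ∀ j : ℕ, 1 ≤ j → ∀ x ∈ J, (fun y => φ y - y)^[j] x ∈ J ^ (j + 1) := by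
    intro j hj
    induction j with
    | zero => omega
    | succ j ih =>
      intro x hx
      rcases Nat.eq_zero_or_pos j with h | h
      · subst h
        simpa using hφ x hx
      · rw [Function.iterate_succ_apply']
        exact key j _ (ih h x hx)
  refine ⟨main, fun m hm hbot x hx => ?_⟩
  have h1 : 1 ≤ m - 1 := by omega
  have := main (m - 1) h1 x hx
  have hm1 : m - 1 + 1 = m := by omega
  rw [hm1, hbot] at this
  simpa using this
end

section
/- Let k be a field and A a nontrivial finite-dimensional associative unital k-algebra, and let a be a unit of A. Then the set {t ∈ k : (1−t)·1_A + t·a is not a unit of A} is finite. -/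
open Polynomial

/-- In a finite-dimensional algebra over a field, an element whose left-multiplication
map has nonzero determinant is a unit. -/
lemma isUnit_of_det_lmul_ne_zero {k A : Type*} [Field k] [Ring A] [Algebra k A]
    [FiniteDimensional k A] {x : A}
    (h : LinearMap.det ((Algebra.lmul k A) x) ≠ 0) : IsUnit x := by
  classical
  let b := Module.finBasis k A
  have hM : IsUnit (LinearMap.toMatrix b b ((Algebra.lmul k A) x)) := by
    rw [Matrix.isUnit_iff_isUnit_det, isUnit_iff_ne_zero, LinearMap.det_toMatrix]
    exact h
  have hf : IsUnit ((Algebra.lmul k A) x) := by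
    have := hM.map (LinearMap.toMatrixAlgEquiv b).symm
    rwa [show (LinearMap.toMatrixAlgEquiv b).symm (LinearMap.toMatrix b b ((Algebra.lmul k A) x))
      = (Algebra.lmul k A) x from (LinearMap.toMatrixAlgEquiv b).symm_apply_apply _] at this
  -- get a right inverse y: x * y = 1
  obtain ⟨g, hg⟩ := hf.exists_right_inv
  have hxy : x * g 1 = 1 := by
    have := congrFun (congrArg (fun f : Module.End k A => (f : A → A)) hg) 1
    simpa [Module.End.mul_apply] using this
  have hlm : (Algebra.lmul k A) x * (Algebra.lmul k A) (g 1) = 1 := by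
    rw [← map_mul, hxy, map_one]
  have hlm' : (Algebra.lmul k A) (g 1) * (Algebra.lmul k A) x = 1 :=
    mul_eq_one_comm.mp hlm
  have hyx : g 1 * x = 1 := by
    have := congrFun (congrArg (fun f : Module.End k A => (f : A → A)) hlm') 1
    simpa [Module.End.mul_apply] using this
  exact ⟨⟨x, g 1, hxy, hyx⟩, rfl⟩

/-- key ingredient of the paper's Proposition 4.1. Let `k` be a field and `A`
a nontrivial finite-dimensional associative unital `k`-algebra, and let `a` be a unit of `A`.
Then the set of scalars `t ∈ k` for which `(1 - t)·1_A + t·a` fails to be a unit is finite. -/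
theorem stmt_2 (k A : Type*) [Field k] [Ring A] [Algebra k A]
    [Nontrivial A] [FiniteDimensional k A]
    (a : A) (ha : IsUnit a) :
    {t : k | ¬ IsUnit ((1 - t) • (1 : A) + t • a)}.Finite := by
  classical
  let b := Module.finBasis k A
  let B : Matrix _ _ k := LinearMap.toMatrix b b ((Algebra.lmul k A) a)
  -- the determinant polynomial
  let p : k[X] := ((1 - X : k[X]) • (1 : Matrix _ _ k[X]) + (X : k[X]) • B.map C).det
  have hev : ∀ t : k, p.eval t =
      LinearMap.det ((Algebra.lmul k A) ((1 - t) • (1 : A) + t • a)) := by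
    intro t
    have h1 : ((1 - X : k[X]) • (1 : Matrix _ _ k[X]) + (X : k[X]) • B.map C).map
        (evalRingHom t) = (1 - t) • (1 : Matrix _ _ k) + t • B := by
      ext i j
      simp [Matrix.map_apply, Matrix.add_apply, Matrix.smul_apply, Matrix.one_apply,
        B, smul_eq_mul]
      split <;> simp <;> ring
    have h2 : p.eval t = ((1 - t) • (1 : Matrix _ _ k) + t • B).det := by
      rw [← h1]
      show (evalRingHom t) _ = _
      rw [RingHom.map_det, RingHom.mapMatrix_apply]
    rw [h2]
    have h3 : (Algebra.lmul k A) ((1 - t) • (1 : A) + t • a)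
        = (1 - t) • (1 : Module.End k A) + t • (Algebra.lmul k A) a := by
      simp [map_add, map_smul, map_one]
    rw [h3, ← LinearMap.det_toMatrix b]
    congr 1
    simp [map_add, map_smul, LinearMap.toMatrix_one, B]
  have hp0 : p ≠ 0 := by
    intro hp
    have := hev 0
    rw [hp] at this
    simp only [eval_zero] at this
    have h0 : LinearMap.det ((Algebra.lmul k A) ((1 - (0:k)) • (1 : A) + (0:k) • a)) ≠ 0 := by
      simp only [sub_zero, one_smul, zero_smul, add_zero, map_one]
      simp
    exact h0 this.symm
  apply Set.Finite.subset (p.finite_setOf_isRoot hp0)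
  intro t ht
  simp only [Set.mem_setOf_eq] at ht ⊢
  have : LinearMap.det ((Algebra.lmul k A) ((1 - t) • (1 : A) + t • a)) = 0 := by
    by_contra hd
    exact ht (isUnit_of_det_lmul_ne_zero hd)
  rw [IsRoot, hev t, this]
end

section
/- Let k be a field, A a finite-dimensional associative unital k-algebra with Jacobson radical J, and A_s a k-subalgebra of A such that A = A_s ⊕ J as k-vector spaces (internal direct sum of subspaces). Let G = {σ ∈ Aut_k(A) : σ(a) = a for all a ∈ A_s} and let H be the group (under composition) of bijective k-linear maps ψ : J → J satisfying ψ(xy) = ψ(x)ψ(y) for all x, y ∈ J and ψ(a r b) = a ψ(r) b for all a, b ∈ A_s and r ∈ J. Then every σ ∈ G maps J onto J, and the restriction map σ ↦ σ|_J is a group isomorphism from G onto H. -/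
noncomputable section

variable (k A : Type*) [Field k] [Ring A] [Algebra k A]

/-- The Jacobson radical of `A`, viewed as a `k`-submodule of `A`. -/
def jacobsonRadical : Submodule k A :=
  Submodule.restrictScalars k ((⊥ : Ideal A).jacobson)

/-- The Jacobson radical is closed under right multiplication. -/
theorem jacobsonRadical.mul_mem_right {x : A} (b : A) (hx : x ∈ jacobsonRadical k A) :
    x * b ∈ jacobsonRadical k A := by
  have hx' : x ∈ ((⊥ : Ideal A).jacobson) := hx
  rw [Ideal.mem_jacobson_iff] at hx'
  show x * b ∈ ((⊥ : Ideal A).jacobson)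
  rw [Ideal.mem_jacobson_iff]
  intro y
  obtain ⟨u, hu⟩ := hx' (b * y)
  rw [Ideal.mem_bot] at hu
  have hc : u * (b * y) * x + u = 1 := sub_eq_zero.mp hu
  refine ⟨1 - y * x * u * b, ?_⟩
  rw [Ideal.mem_bot]
  have expand : (1 - y * x * u * b) * y * (x * b) + (1 - y * x * u * b) - 1
      = y * x * b - y * x * (u * (b * y) * x + u) * b := by noncomm_ring
  rw [expand, hc]
  noncomm_ring

theorem jacobsonRadical.mul_mem {x y : A} (hx : x ∈ jacobsonRadical k A)
    (hy : y ∈ jacobsonRadical k A) : x * y ∈ jacobsonRadical k A :=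
  Ideal.mul_mem_left _ x hy

/-- The subgroup of `k`-algebra automorphisms of `A` fixing the subalgebra `A_s` pointwise. -/
def fixSubgroup (A_s : Subalgebra k A) : Subgroup (A ≃ₐ[k] A) where
  carrier := {σ | ∀ a ∈ A_s, σ a = a}
  one_mem' := fun _ _ => rfl
  mul_mem' := by
    intro σ τ hσ hτ a ha
    show σ (τ a) = a
    rw [hτ a ha, hσ a ha]
  inv_mem' := by
    intro σ hσ a ha
    show σ.symm a = a
    conv_lhs => rw [← hσ a ha]
    exact σ.symm_apply_apply a

/-- The subgroup of bijective `k`-linear maps `ψ : J → J` such that `ψ (x y) = ψ x · ψ y`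
for `x, y ∈ jacobsonRadical k A` and `ψ (a r b) = a · ψ r · b` for `a, b ∈ A_s`, `r ∈ jacobsonRadical k A`
(the `A_s`-bimodule algebra automorphisms of `J`). -/
def bimodAlgAutSubgroup (A_s : Subalgebra k A) :
    Subgroup ((jacobsonRadical k A) ≃ₗ[k] (jacobsonRadical k A)) where
  carrier := {ψ |
    (∀ x y : jacobsonRadical k A,
        ((ψ ⟨(x : A) * (y : A), jacobsonRadical.mul_mem k A x.2 y.2⟩ : A)
          = (ψ x : A) * (ψ y : A))) ∧
    (∀ a b : A_s, ∀ r : jacobsonRadical k A,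
        ∀ h : (a : A) * (r : A) * (b : A) ∈ jacobsonRadical k A,
        ((ψ ⟨(a : A) * (r : A) * (b : A), h⟩ : A) = (a : A) * (ψ r : A) * (b : A)))}
  one_mem' := ⟨fun _ _ => rfl, fun _ _ _ _ => rfl⟩
  mul_mem' := by
    rintro ψ φ ⟨hψ1, hψ2⟩ ⟨hφ1, hφ2⟩
    constructor
    · intro x y
      have key : φ ⟨(x : A) * (y : A), jacobsonRadical.mul_mem k A x.2 y.2⟩
          = ⟨(φ x : A) * (φ y : A), jacobsonRadical.mul_mem k A (φ x).2 (φ y).2⟩ :=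
        Subtype.ext (hφ1 x y)
      show ((ψ (φ _) : A) = _)
      rw [key, hψ1 (φ x) (φ y)]
      rfl
    · intro a b r h
      have hmem : (a : A) * (φ r : A) * (b : A) ∈ jacobsonRadical k A := by
        rw [← hφ2 a b r h]
        exact (φ ⟨(a : A) * (r : A) * (b : A), h⟩).2
      have key : φ ⟨(a : A) * (r : A) * (b : A), h⟩
          = ⟨(a : A) * (φ r : A) * (b : A), hmem⟩ := Subtype.ext (hφ2 a b r h)
      show ((ψ (φ _) : A) = _)
      rw [key, hψ2 a b (φ r) hmem]
      rfl
  inv_mem' := by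
    rintro ψ ⟨hψ1, hψ2⟩
    constructor
    · intro x y
      have key : ψ ⟨(ψ.symm x : A) * (ψ.symm y : A),
            jacobsonRadical.mul_mem k A (ψ.symm x).2 (ψ.symm y).2⟩
          = ⟨(x : A) * (y : A), jacobsonRadical.mul_mem k A x.2 y.2⟩ := by
        refine Subtype.ext ?_
        rw [hψ1 (ψ.symm x) (ψ.symm y)]
        simp
      show ((ψ.symm ⟨(x : A) * (y : A), _⟩ : A) = (ψ.symm x : A) * (ψ.symm y : A))
      rw [← key, ψ.symm_apply_apply]
    · intro a b r h
      have hmem : (a : A) * (ψ.symm r : A) * (b : A) ∈ jacobsonRadical k A :=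
        jacobsonRadical.mul_mem_right k A (b : A)
          (Ideal.mul_mem_left _ (a : A) (ψ.symm r).2)
      have key : ψ ⟨(a : A) * (ψ.symm r : A) * (b : A), hmem⟩
          = ⟨(a : A) * (r : A) * (b : A), h⟩ := by
        refine Subtype.ext ?_
        rw [hψ2 a b (ψ.symm r) hmem]
        simp
      show ((ψ.symm ⟨(a : A) * (r : A) * (b : A), h⟩ : A)
          = (a : A) * (ψ.symm r : A) * (b : A))
      rw [← key, ψ.symm_apply_apply]

variable {k A} in
lemma jac_map_mem (σ : A ≃ₐ[k] A) {x : A} (hx : x ∈ jacobsonRadical k A) :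
    σ x ∈ jacobsonRadical k A := by
  have hx' : x ∈ ((⊥ : Ideal A).jacobson) := hx
  rw [Ideal.mem_jacobson_iff] at hx'
  show σ x ∈ ((⊥ : Ideal A).jacobson)
  rw [Ideal.mem_jacobson_iff]
  intro y
  obtain ⟨z, hz⟩ := hx' (σ.symm y)
  rw [Ideal.mem_bot] at hz
  refine ⟨σ z, ?_⟩
  rw [Ideal.mem_bot]
  calc σ z * y * σ x + σ z - 1 = σ (z * σ.symm y * x + z - 1) := by
        simp [map_add, map_sub, map_mul]
    _ = 0 := by rw [hz, map_zero]

variable {k A} in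
/-- Restriction of an algebra automorphism to the Jacobson radical. -/
def restrEquiv (σ : A ≃ₐ[k] A) :
    jacobsonRadical k A ≃ₗ[k] jacobsonRadical k A where
  toFun x := ⟨σ x, jac_map_mem σ x.2⟩
  invFun x := ⟨σ.symm x, jac_map_mem σ.symm x.2⟩
  map_add' x y := by ext; simp
  map_smul' c x := by ext; simp
  left_inv x := by ext; simp
  right_inv x := by ext; simp

variable {k A} in
/-- Extend a linear endomorphism of `J` to `A` by the identity on `A_s`. -/
def extendMap (A_s : Subalgebra k A)
    (h : IsCompl (Subalgebra.toSubmodule A_s) (jacobsonRadical k A))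
    (ψ : jacobsonRadical k A →ₗ[k] jacobsonRadical k A) : A →ₗ[k] A :=
  (Subalgebra.toSubmodule A_s).subtype.comp
      (Submodule.projectionOnto _ _ h)
    + (jacobsonRadical k A).subtype.comp
        (ψ.comp (Submodule.projectionOnto _ _ h.symm))

variable {k A} in
lemma extendMap_apply (A_s : Subalgebra k A)
    (h : IsCompl (Subalgebra.toSubmodule A_s) (jacobsonRadical k A))
    (ψ : jacobsonRadical k A →ₗ[k] jacobsonRadical k A) {u v : A}
    (hu : u ∈ A_s) (hv : v ∈ jacobsonRadical k A) :
    extendMap A_s h ψ (u + v) = u + ψ ⟨v, hv⟩ := by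
  have hu' : u ∈ Subalgebra.toSubmodule A_s := hu
  have h1 : (Submodule.projectionOnto _ _ h) (u + v) = ⟨u, hu'⟩ := by
    rw [map_add, Submodule.projectionOnto_apply_of_mem_right h hv, add_zero]
    exact Submodule.projectionOnto_apply_left h ⟨u, hu'⟩
  have h2 : (Submodule.projectionOnto _ _ h.symm) (u + v) = ⟨v, hv⟩ := by
    rw [map_add, Submodule.projectionOnto_apply_of_mem_right h.symm hu', zero_add]
    exact Submodule.projectionOnto_apply_left h.symm ⟨v, hv⟩
  simp only [extendMap, LinearMap.add_apply, LinearMap.comp_apply, h1, h2,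
    Submodule.subtype_apply]

/-- paper's Lemma 4.24: `G_{A,A_s} ≅ Aut_{A_s^#-algebra}(J)`. Let `A` be a
finite-dimensional associative unital `k`-algebra with Jacobson radical `J` and `A_s` a
subalgebra with `A = A_s ⊕ J` as `k`-vector spaces.  Let `G` be the group of `k`-algebra
automorphisms fixing `A_s` pointwise and `H` the group of bijective `k`-linear maps
`ψ : J → J` with `ψ(xy) = ψ(x)ψ(y)` and `ψ(a r b) = a ψ(r) b` for `a, b ∈ A_s`, `r ∈ jacobsonRadical k A`.
Then every `σ ∈ G` maps `J` onto `J` and the restriction map `σ ↦ σ|_J` is a group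
isomorphism from `G` onto `H`. -/
theorem stmt_4 [FiniteDimensional k A] (A_s : Subalgebra k A)
    (hinf : Subalgebra.toSubmodule A_s ⊓ jacobsonRadical k A = ⊥)
    (hsup : Subalgebra.toSubmodule A_s ⊔ jacobsonRadical k A = ⊤) :
    (∀ σ : A ≃ₐ[k] A, (∀ a ∈ A_s, σ a = a) →
        ⇑σ '' ((jacobsonRadical k A : Submodule k A) : Set A)
          = ((jacobsonRadical k A : Submodule k A) : Set A)) ∧
    ∃ e : fixSubgroup k A A_s ≃* bimodAlgAutSubgroup k A A_s,
      ∀ (σ : fixSubgroup k A A_s) (x : jacobsonRadical k A),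
        (((e σ : (jacobsonRadical k A) ≃ₗ[k] (jacobsonRadical k A)) x : A))
          = (σ : A ≃ₐ[k] A) x := by
  have hcompl : IsCompl (Subalgebra.toSubmodule A_s) (jacobsonRadical k A) :=
    ⟨disjoint_iff.mpr hinf, codisjoint_iff.mpr hsup⟩
  have decomp : ∀ x : A, ∃ a ∈ A_s, ∃ r ∈ jacobsonRadical k A, a + r = x := by
    intro x
    have hx : x ∈ Subalgebra.toSubmodule A_s ⊔ jacobsonRadical k A := by
      rw [hsup]; trivial
    obtain ⟨a, ha, r, hr, hsum⟩ := Submodule.mem_sup.mp hx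
    exact ⟨a, ha, r, hr, hsum⟩
  constructor
  · intro σ hσ
    apply Set.eq_of_subset_of_subset
    · rintro _ ⟨x, hx, rfl⟩
      exact jac_map_mem σ hx
    · intro x hx
      exact ⟨σ.symm x, jac_map_mem σ.symm hx, σ.apply_symm_apply x⟩
  · -- the restriction monoid hom
    have memH : ∀ σ : fixSubgroup k A A_s,
        restrEquiv (σ : A ≃ₐ[k] A) ∈ bimodAlgAutSubgroup k A A_s := by
      intro σ
      refine ⟨fun x y => ?_, fun a b r h => ?_⟩
      · show (σ : A ≃ₐ[k] A) ((x : A) * y) = _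
        rw [map_mul]; rfl
      · show (σ : A ≃ₐ[k] A) ((a : A) * r * b) = _
        rw [map_mul, map_mul, σ.2 a a.2, σ.2 b b.2]; rfl
    let f : fixSubgroup k A A_s →* bimodAlgAutSubgroup k A A_s :=
    { toFun := fun σ => ⟨restrEquiv (σ : A ≃ₐ[k] A), memH σ⟩
      map_one' := Subtype.ext (LinearEquiv.ext fun x => Subtype.ext rfl)
      map_mul' := fun σ τ => Subtype.ext (LinearEquiv.ext fun x => Subtype.ext rfl) }
    have hinj : Function.Injective f := by
      intro σ τ hst
      refine Subtype.ext (AlgEquiv.ext fun x => ?_)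
      obtain ⟨a, ha, r, hr, rfl⟩ := decomp x
      have h3 : ((restrEquiv (σ : A ≃ₐ[k] A)) ⟨r, hr⟩ : A)
          = ((restrEquiv (τ : A ≃ₐ[k] A)) ⟨r, hr⟩ : A) := by
        have := congrArg (fun e : bimodAlgAutSubgroup k A A_s =>
          (((e : (jacobsonRadical k A) ≃ₗ[k] (jacobsonRadical k A)) ⟨r, hr⟩ : A))) hst
        exact this
      show (σ : A ≃ₐ[k] A) (a + r) = (τ : A ≃ₐ[k] A) (a + r)
      rw [map_add, map_add, σ.2 a ha, τ.2 a ha]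
      exact congrArg (a + ·) h3
    have hsurj : Function.Surjective f := by
      rintro ⟨ψ, hψ1, hψ2⟩
      -- the extended maps
      set L := extendMap A_s hcompl ψ.toLinearMap with hL
      set L' := extendMap A_s hcompl ψ.symm.toLinearMap with hL'
      have hLapp : ∀ {u v : A} (hu : u ∈ A_s) (hv : v ∈ jacobsonRadical k A),
          L (u + v) = u + (ψ ⟨v, hv⟩ : A) := fun hu hv =>
        extendMap_apply A_s hcompl ψ.toLinearMap hu hv
      have hL'app : ∀ {u v : A} (hu : u ∈ A_s) (hv : v ∈ jacobsonRadical k A),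
          L' (u + v) = u + (ψ.symm ⟨v, hv⟩ : A) := fun hu hv =>
        extendMap_apply A_s hcompl ψ.symm.toLinearMap hu hv
      have hLL' : L.comp L' = LinearMap.id := by
        refine LinearMap.ext fun x => ?_
        obtain ⟨a, ha, r, hr, rfl⟩ := decomp x
        have step1 : L' (a + r) = a + (ψ.symm ⟨r, hr⟩ : A) := hL'app ha hr
        have step2 : L (a + (ψ.symm ⟨r, hr⟩ : A))
            = a + (ψ ⟨(ψ.symm ⟨r, hr⟩ : A), (ψ.symm ⟨r, hr⟩).2⟩ : A) :=
          hLapp ha (ψ.symm ⟨r, hr⟩).2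
        simp only [LinearMap.comp_apply, LinearMap.id_apply, step1, step2]
        congr 1
        have : (⟨(ψ.symm ⟨r, hr⟩ : A), (ψ.symm ⟨r, hr⟩).2⟩ : jacobsonRadical k A) = ψ.symm ⟨r, hr⟩ := rfl
        rw [this, LinearEquiv.apply_symm_apply]
      have hL'L : L'.comp L = LinearMap.id := by
        refine LinearMap.ext fun x => ?_
        obtain ⟨a, ha, r, hr, rfl⟩ := decomp x
        have step1 : L (a + r) = a + (ψ ⟨r, hr⟩ : A) := hLapp ha hr
        have step2 : L' (a + (ψ ⟨r, hr⟩ : A))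
            = a + (ψ.symm ⟨(ψ ⟨r, hr⟩ : A), (ψ ⟨r, hr⟩).2⟩ : A) :=
          hL'app ha (ψ ⟨r, hr⟩).2
        simp only [LinearMap.comp_apply, LinearMap.id_apply, step1, step2]
        congr 1
        have : (⟨(ψ ⟨r, hr⟩ : A), (ψ ⟨r, hr⟩).2⟩ : jacobsonRadical k A) = ψ ⟨r, hr⟩ := rfl
        rw [this, LinearEquiv.symm_apply_apply]
      set Lequiv := LinearEquiv.ofLinear L L' hLL' hL'L with hLe
      -- multiplicativity helpers
      have eleft : ∀ {a s : A} (ha : a ∈ A_s) (hs : s ∈ jacobsonRadical k A) (h : a * s ∈ jacobsonRadical k A),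
          (ψ ⟨a * s, h⟩ : A) = a * (ψ ⟨s, hs⟩ : A) := by
        intro a s ha hs h
        have h' : ((⟨a, ha⟩ : A_s) : A) * ((⟨s, hs⟩ : jacobsonRadical k A) : A) * (((1 : A_s)) : A) ∈ jacobsonRadical k A := by
          simpa using h
        have key : (⟨a * s, h⟩ : jacobsonRadical k A)
            = ⟨((⟨a, ha⟩ : A_s) : A) * ((⟨s, hs⟩ : jacobsonRadical k A) : A) * (((1 : A_s)) : A), h'⟩ :=
          Subtype.ext (by simp)
        rw [key, hψ2 ⟨a, ha⟩ 1 ⟨s, hs⟩ h']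
        simp
      have eright : ∀ {r b : A} (hr : r ∈ jacobsonRadical k A) (hb : b ∈ A_s) (h : r * b ∈ jacobsonRadical k A),
          (ψ ⟨r * b, h⟩ : A) = (ψ ⟨r, hr⟩ : A) * b := by
        intro r b hr hb h
        have h' : (((1 : A_s)) : A) * ((⟨r, hr⟩ : jacobsonRadical k A) : A) * ((⟨b, hb⟩ : A_s) : A) ∈ jacobsonRadical k A := by
          simpa using h
        have key : (⟨r * b, h⟩ : jacobsonRadical k A)
            = ⟨(((1 : A_s)) : A) * ((⟨r, hr⟩ : jacobsonRadical k A) : A) * ((⟨b, hb⟩ : A_s) : A), h'⟩ :=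
          Subtype.ext (by simp)
        rw [key, hψ2 1 ⟨b, hb⟩ ⟨r, hr⟩ h']
        simp
      have hone : Lequiv (1 : A) = 1 := by
        have : (1 : A) = (1 : A) + (0 : A) := (add_zero _).symm
        show L 1 = 1
        rw [this, hLapp (one_mem A_s) (zero_mem (jacobsonRadical k A))]
        have : (⟨(0 : A), zero_mem (jacobsonRadical k A)⟩ : jacobsonRadical k A) = 0 := rfl
        rw [this, map_zero]
        simp
      have hmul : ∀ x y : A, Lequiv (x * y) = Lequiv x * Lequiv y := by
        intro x y
        obtain ⟨a, ha, r, hr, rfl⟩ := decomp x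
        obtain ⟨b, hb, s, hs, rfl⟩ := decomp y
        have h1 : a * s ∈ jacobsonRadical k A := Ideal.mul_mem_left _ _ hs
        have h2 : r * b ∈ jacobsonRadical k A := jacobsonRadical.mul_mem_right k A b hr
        have h3 : r * s ∈ jacobsonRadical k A := jacobsonRadical.mul_mem k A hr hs
        have hw : a * s + r * b + r * s ∈ jacobsonRadical k A := add_mem (add_mem h1 h2) h3
        have hprod : (a + r) * (b + s) = a * b + (a * s + r * b + r * s) := by
          noncomm_ring
        show L ((a + r) * (b + s)) = L (a + r) * L (b + s)
        rw [hprod, hLapp (mul_mem ha hb) hw, hLapp ha hr, hLapp hb hs]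
        have hsplit : (⟨a * s + r * b + r * s, hw⟩ : jacobsonRadical k A)
            = ⟨a * s, h1⟩ + ⟨r * b, h2⟩ + ⟨r * s, h3⟩ := Subtype.ext rfl
        have hψw : (ψ ⟨a * s + r * b + r * s, hw⟩ : A)
            = a * (ψ ⟨s, hs⟩ : A) + (ψ ⟨r, hr⟩ : A) * b
              + (ψ ⟨r, hr⟩ : A) * (ψ ⟨s, hs⟩ : A) := by
          rw [hsplit, map_add, map_add]
          push_cast
          rw [eleft ha hs h1, eright hr hb h2, hψ1 ⟨r, hr⟩ ⟨s, hs⟩]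
        rw [hψw]
        noncomm_ring
      set σ : A ≃ₐ[k] A := AlgEquiv.ofLinearEquiv Lequiv hone hmul with hσ
      have hσfix : ∀ a ∈ A_s, σ a = a := by
        intro a ha
        show L a = a
        have : a = a + (0 : A) := (add_zero _).symm
        rw [this, hLapp ha (zero_mem (jacobsonRadical k A))]
        have h0 : (⟨(0 : A), zero_mem (jacobsonRadical k A)⟩ : jacobsonRadical k A) = 0 := rfl
        rw [h0, map_zero]
        simp
      refine ⟨⟨σ, hσfix⟩, ?_⟩
      refine Subtype.ext (LinearEquiv.ext fun x => Subtype.ext ?_)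
      show σ (x : A) = (ψ x : A)
      have : (x : A) = (0 : A) + (x : A) := (zero_add _).symm
      show L (x : A) = (ψ x : A)
      rw [this, hLapp (zero_mem A_s) x.2]
      simp
    refine ⟨MulEquiv.ofBijective f ⟨hinj, hsurj⟩, fun σ x => rfl⟩

end
end

section
/- Let k be a field, n ≥ 1, and let f ∈ k[X_1,…,X_n] be a homogeneous polynomial of degree d with 2 ≤ d < l. Set I = ⟨X_1,…,X_n⟩^l + ⟨f⟩. Then for every invertible matrix M ∈ GL_n(k): F_M(I) ⊆ I if and only if there exists α ∈ k^× such that F_M(f) = α·f. -/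
open MvPolynomial


open MvPolynomial

lemma aux_constantCoeff_zero {k : Type*} [CommRing k] {n : ℕ}
    {a : MvPolynomial (Fin n) k}
    (h : a ∈ Ideal.span (Set.range (X : Fin n → MvPolynomial (Fin n) k))) :
    constantCoeff a = 0 := by
  refine Submodule.span_induction (fun x hx => ?_) (by simp) ?_ ?_ h
  · obtain ⟨i, rfl⟩ := hx
    simp
  · intro x y _ _ hx hy; simp [map_add, hx, hy]
  · intro r x _ hx
    simp [smul_eq_mul, map_mul, hx]

lemma aux_coeff_pow_span {k : Type*} [CommRing k] {n : ℕ} (l : ℕ)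
    {g : MvPolynomial (Fin n) k}
    (hg : g ∈ (Ideal.span (Set.range (X : Fin n → MvPolynomial (Fin n) k))) ^ l)
    {σ : Fin n →₀ ℕ} (hσ : σ.degree < l) : coeff σ g = 0 := by
  induction l generalizing g σ with
  | zero => omega
  | succ l ih =>
    rw [pow_succ] at hg
    refine Submodule.mul_induction_on
      (C := fun g => ∀ σ : Fin n →₀ ℕ, σ.degree < l + 1 → coeff σ g = 0) hg ?_ ?_ σ hσ
    · intro a ha b hb σ hσ
      rw [coeff_mul]
      apply Finset.sum_eq_zero
      rintro ⟨u, v⟩ huv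
      rw [Finset.HasAntidiagonal.mem_antidiagonal] at huv
      by_cases hu : u.degree < l
      · rw [ih ha hu, zero_mul]
      · have hdeg : u.degree + v.degree = σ.degree := by
          rw [← huv]
          simp [Finsupp.degree_eq_weight_one, map_add]
        have hv : v = 0 := by
          rw [← Finsupp.degree_eq_zero_iff]
          omega
        subst hv
        have hb0 := aux_constantCoeff_zero hb
        rw [show (coeff (0 : Fin n →₀ ℕ) b) = constantCoeff b from rfl, hb0, mul_zero]
    · intro x y hx hy σ hσ
      rw [coeff_add, hx _ hσ, hy _ hσ, add_zero]

lemma aux_hc_mul {k : Type*} [CommRing k] {n d : ℕ}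
    {f h : MvPolynomial (Fin n) k} (hf : f.IsHomogeneous d) :
    homogeneousComponent d (h * f) = C (coeff 0 h) * f := by
  conv_lhs => rw [← sum_homogeneousComponent h, Finset.sum_mul, map_sum]
  have key : ∀ j, homogeneousComponent d (homogeneousComponent j h * f)
      = if j = 0 then homogeneousComponent 0 h * f else 0 := by
    intro j
    have hmem : homogeneousComponent j h * f ∈ homogeneousSubmodule (Fin n) k (j + d) := by
      rw [mem_homogeneousSubmodule]
      exact (homogeneousComponent_isHomogeneous j h).mul hf
    rw [homogeneousComponent_of_mem hmem]
    by_cases hj : j = 0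
    · simp [hj]
    · rw [if_neg (by omega), if_neg hj]
  rw [Finset.sum_congr rfl (fun j _ => key j)]
  rw [Finset.sum_ite_eq' (Finset.range (h.totalDegree + 1)) 0
    (fun _ => homogeneousComponent 0 h * f)]
  simp [homogeneousComponent_zero]

lemma aux_comp {k : Type*} [Field k] {n : ℕ} (M : GL (Fin n) k)
    (p : MvPolynomial (Fin n) k) :
    aeval (fun j => ∑ i, C (((M⁻¹ : GL (Fin n) k) : Matrix (Fin n) (Fin n) k) i j) * X i)
      (aeval (fun j => ∑ i, C ((M : Matrix (Fin n) (Fin n) k) i j) * X i) p) = p := by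
  set A := ((M : Matrix (Fin n) (Fin n) k)) with hA
  set B := (((M⁻¹ : GL (Fin n) k) : Matrix (Fin n) (Fin n) k)) with hB
  have hBA : B * A = 1 := M.inv_mul
  rw [aeval_eq_bind₁, aeval_eq_bind₁, bind₁_bind₁]
  have hX : (fun i => bind₁ (fun j => ∑ q, C (B q j) * X q) (∑ p, C (A p i) * X p))
      = (X : Fin n → MvPolynomial (Fin n) k) := by
    funext i
    simp only [map_sum, map_mul, bind₁_C_right, bind₁_X_right]
    calc ∑ p, C (A p i) * ∑ q, C (B q p) * X q
        = ∑ p, ∑ q, C (B q p * A p i) * X q := by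
          refine Finset.sum_congr rfl fun p _ => ?_
          rw [Finset.mul_sum]
          refine Finset.sum_congr rfl fun q _ => ?_
          rw [map_mul]; ring
      _ = ∑ q, ∑ p, C (B q p * A p i) * X q := Finset.sum_comm
      _ = ∑ q, C ((B * A) q i) * X q := by
          refine Finset.sum_congr rfl fun q _ => ?_
          rw [Matrix.mul_apply, map_sum, Finset.sum_mul]
      _ = X i := by
          rw [hBA]
          simp [Matrix.one_apply, apply_ite (C : k → MvPolynomial (Fin n) k)]
  rw [show (fun i => bind₁ (fun j => ∑ q, C (B q j) * X q) ((fun j => ∑ p, C (A p j) * X p) i))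
      = (X : Fin n → MvPolynomial (Fin n) k) from hX, bind₁_X_left]
  rfl

/-- core of the paper's Proposition 5.12: `Im(Φ_A) = Sim(f)`. Let `f` be a
homogeneous polynomial of degree `d` in `k[X_1,…,X_n]` with `2 ≤ d < l` and set
`I = ⟨X_1,…,X_n⟩^l + ⟨f⟩`.  For every `M ∈ GL_n(k)`, the linear change of variables `F_M`
maps `I` into `I` if and only if `F_M f = α • f` for some `α ∈ k^×`. -/
theorem stmt_7 (k : Type*) [Field k] (n l d : ℕ) (hn : 1 ≤ n)
    (f : MvPolynomial (Fin n) k) (hf : f.IsHomogeneous d) (hd2 : 2 ≤ d) (hdl : d < l)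
    (I : Ideal (MvPolynomial (Fin n) k))
    (hI : I = (Ideal.span (Set.range (X : Fin n → MvPolynomial (Fin n) k))) ^ l
            + Ideal.span {f})
    (M : GL (Fin n) k) :
    (∀ g ∈ I,
        aeval (fun j => ∑ i, C ((M : Matrix (Fin n) (Fin n) k) i j) * X i) g ∈ I) ↔
    ∃ α : kˣ,
        aeval (fun j => ∑ i, C ((M : Matrix (Fin n) (Fin n) k) i j) * X i) f
          = (α : k) • f := by
  subst hI
  set A := ((M : Matrix (Fin n) (Fin n) k)) with hA
  set m : Ideal (MvPolynomial (Fin n) k) :=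
    Ideal.span (Set.range (X : Fin n → MvPolynomial (Fin n) k)) with hm
  constructor
  · intro H
    have hfmem : f ∈ m ^ l + Ideal.span {f} := by
      rw [Submodule.add_eq_sup]
      exact Submodule.mem_sup_right (Ideal.mem_span_singleton_self f)
    have hmem := H f hfmem
    rw [Submodule.add_eq_sup, Submodule.mem_sup] at hmem
    obtain ⟨g, hg, b, hb, hgb⟩ := hmem
    rw [Ideal.mem_span_singleton'] at hb
    obtain ⟨h, rfl⟩ := hb
    -- homogeneity of the image
    have hφf : (aeval (fun j => ∑ i, C (A i j) * X i) f).IsHomogeneous d := by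
      have h1 : ∀ j, (∑ i, C (A i j) * X i).IsHomogeneous 1 :=
        fun j => IsHomogeneous.sum _ _ _ (fun i _ => isHomogeneous_C_mul_X _ _)
      simpa using hf.aeval (fun j => ∑ i, C (A i j) * X i) h1
    have h1 := homogeneousComponent_of_mem
      ((mem_homogeneousSubmodule d _).mpr hφf) (m := d)
    rw [if_pos rfl] at h1
    have h2 : homogeneousComponent d g = 0 := by
      ext σ
      rw [coeff_homogeneousComponent, coeff_zero]
      split_ifs with hσ
      · exact aux_coeff_pow_span l hg (by rw [hσ]; exact hdl)
      · rfl
    have key : aeval (fun j => ∑ i, C (A i j) * X i) f = C (coeff 0 h) * f := by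
      have hc := congrArg (homogeneousComponent d) hgb
      rw [map_add, h2, zero_add, aux_hc_mul hf, h1] at hc
      exact hc.symm
    by_cases hc : coeff 0 h = 0
    · have hf0 : f = 0 := by
        have := aux_comp M f
        rw [key, hc, map_zero, zero_mul, map_zero] at this
        exact this.symm
      exact ⟨1, by simp [hf0]⟩
    · exact ⟨Units.mk0 _ hc, by rw [key, Units.val_mk0, smul_eq_C_mul]⟩
  · rintro ⟨α, hα⟩ g hg
    rw [Submodule.add_eq_sup, Submodule.mem_sup] at hg
    obtain ⟨a, ha, b, hb, rfl⟩ := hg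
    rw [map_add, Submodule.add_eq_sup]
    apply Submodule.add_mem
    · apply Submodule.mem_sup_left
      have hmap : Ideal.map (aeval (fun j => ∑ i, C (A i j) * X i) :
          MvPolynomial (Fin n) k →ₐ[k] MvPolynomial (Fin n) k) (m ^ l) ≤ m ^ l := by
        rw [Ideal.map_pow]
        apply Ideal.pow_right_mono
        rw [hm, Ideal.map_span, Ideal.span_le]
        rintro _ ⟨_, ⟨j, rfl⟩, rfl⟩
        rw [aeval_X]
        exact Ideal.sum_mem _ (fun i _ =>
          Ideal.mul_mem_left _ _ (Ideal.subset_span ⟨i, rfl⟩))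
      exact hmap (Ideal.mem_map_of_mem _ ha)
    · apply Submodule.mem_sup_right
      rw [Ideal.mem_span_singleton'] at hb
      obtain ⟨h, rfl⟩ := hb
      rw [map_mul, hα]
      exact Ideal.mem_span_singleton'.mpr
        ⟨aeval (fun j => ∑ i, C (A i j) * X i) h * C (α : k),
          by rw [smul_eq_C_mul]; ring⟩
end

section
/- Let k be a field, n ≥ 1 and l ≥ 2, and let I be a homogeneous ideal of k[X_1,…,X_n] with ⟨X_1,…,X_n⟩^l ⊆ I ⊆ ⟨X_1,…,X_n⟩². Set A = k[X_1,…,X_n]/I, write x_i = X_i + I, and let J be the ideal of A generated by x_1,…,x_n. Then every k-algebra automorphism φ of A factors uniquely as φ = φ_M ∘ u, where M ∈ GL_n(k) satisfies F_M(I) ⊆ I, φ_M is the automorphism of A induced by F_M, and u is a k-algebra automorphism of A with u(x_i) − x_i ∈ J² for every i. -/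
open MvPolynomial

namespace Stmt8Aux

lemma deg_add {σ : Type*} (a b : σ →₀ ℕ) : (a + b).degree = a.degree + b.degree := by
  simp [Finsupp.degree_eq_weight_one, map_add]

lemma deg_single {σ : Type*} (i : σ) : (Finsupp.single i 1).degree = 1 := by
  simp [Finsupp.degree_apply, Finsupp.support_single_ne_zero]

lemma deg_one_eq {σ : Type*} {s : σ →₀ ℕ} (h : s.degree = 1) :
    ∃ i, s = Finsupp.single i 1 := by
  have hs : s ≠ 0 := by rintro rfl; simp at h
  obtain ⟨i, hi⟩ := Finsupp.ne_iff.mp hs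
  simp only [Finsupp.coe_zero, Pi.zero_apply] at hi
  have hle : Finsupp.single i 1 ≤ s := by
    rw [Finsupp.single_le_iff]; omega
  obtain ⟨t, ht⟩ := exists_add_of_le hle
  have : t.degree = 0 := by
    have := deg_add (Finsupp.single i 1) t
    rw [← ht, h, deg_single] at this
    omega
  rw [Finsupp.degree_eq_zero_iff] at this
  exact ⟨i, by rw [ht, this, add_zero]⟩

lemma exists_sub_degree {σ : Type*} (t : ℕ) : ∀ (s : σ →₀ ℕ), t ≤ s.degree →
    ∃ s' : σ →₀ ℕ, s' ≤ s ∧ s'.degree = t := by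
  induction t with
  | zero => exact fun s _ => ⟨0, zero_le, map_zero _⟩
  | succ t ih =>
    intro s hs
    have hs0 : s ≠ 0 := by rintro rfl; simp at hs
    obtain ⟨i, hi⟩ := Finsupp.ne_iff.mp hs0
    simp only [Finsupp.coe_zero, Pi.zero_apply] at hi
    have hle : Finsupp.single i 1 ≤ s := by rw [Finsupp.single_le_iff]; omega
    obtain ⟨s₂, hs₂⟩ := exists_add_of_le hle
    have hd : s.degree = s₂.degree + 1 := by
      rw [hs₂, deg_add, deg_single]; omega
    obtain ⟨s', hs'le, hs'deg⟩ := ih s₂ (by omega)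
    refine ⟨s' + Finsupp.single i 1, ?_, by rw [deg_add, hs'deg, deg_single]⟩
    rw [hs₂, add_comm (Finsupp.single i 1) s₂]
    exact add_le_add hs'le le_rfl

end Stmt8Aux

namespace Stmt8Aux
variable {σ k : Type*} [CommRing k]

local notation "mId" => Ideal.span (Set.range (X : σ → MvPolynomial σ k))

lemma span_X_eq :
    (mId) = Ideal.span ((fun s => monomial s (1:k)) '' {s : σ →₀ ℕ | s.degree = 1}) := by
  congr 1
  ext f
  constructor
  · rintro ⟨i, rfl⟩
    exact ⟨Finsupp.single i 1, deg_single i, by simp [X]⟩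
  · rintro ⟨s, hs, rfl⟩
    obtain ⟨i, rfl⟩ := deg_one_eq hs
    exact ⟨i, by simp [X]⟩

lemma mPow_eq (t : ℕ) :
    (mId) ^ t = Ideal.span ((fun s => monomial s (1:k)) '' {s : σ →₀ ℕ | s.degree = t}) := by
  classical
  induction t with
  | zero =>
    simp only [pow_zero, Ideal.one_eq_top]
    have : {s : σ →₀ ℕ | s.degree = 0} = {0} := by
      ext s; simp [Finsupp.degree_eq_zero_iff]
    rw [this]
    simp [Ideal.span_singleton_one]
  | succ t ih =>
    rw [pow_succ, ih, span_X_eq]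
    apply le_antisymm
    · rw [Ideal.mul_le]
      intro r hr s hs
      rw [mem_ideal_span_monomial_image] at hr hs ⊢
      intro xi hxi
      have := MvPolynomial.support_mul r s hxi
      rw [Finset.mem_add] at this
      obtain ⟨a, ha, b, hb, rfl⟩ := this
      obtain ⟨sa, hsa, hsale⟩ := hr a ha
      obtain ⟨sb, hsb, hsble⟩ := hs b hb
      exact ⟨sa + sb, by rw [Set.mem_setOf_eq, deg_add, hsa, hsb], add_le_add hsale hsble⟩
    · rw [Ideal.span_le]
      rintro _ ⟨s, hs, rfl⟩
      rw [Set.mem_setOf_eq] at hs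
      obtain ⟨s', hs'le, hs'deg⟩ := exists_sub_degree t s (by omega)
      obtain ⟨s₂, rfl⟩ := exists_add_of_le hs'le
      have hs₂ : s₂.degree = 1 := by rw [deg_add, hs'deg] at hs; omega
      have : monomial (s' + s₂) (1:k) = monomial s' 1 * monomial s₂ 1 := by
        rw [monomial_mul, one_mul]
      show monomial (s' + s₂) (1:k) ∈ _
      rw [this]
      exact Ideal.mul_mem_mul (Ideal.subset_span ⟨s', hs'deg, rfl⟩)
        (Ideal.subset_span ⟨s₂, hs₂, rfl⟩)

lemma mem_mPow {f : MvPolynomial σ k} {t : ℕ} :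
    f ∈ (mId) ^ t ↔ ∀ s ∈ f.support, t ≤ s.degree := by
  rw [mPow_eq, mem_ideal_span_monomial_image]
  constructor
  · intro h s hs
    obtain ⟨si, hsi, hle⟩ := h s hs
    rw [Set.mem_setOf_eq] at hsi
    calc t = si.degree := hsi.symm
    _ ≤ s.degree := by
        obtain ⟨u, rfl⟩ := exists_add_of_le hle
        rw [deg_add]; omega
  · intro h s hs
    obtain ⟨s', h1, h2⟩ := exists_sub_degree t s (h s hs)
    exact ⟨s', h2, h1⟩

end Stmt8Aux

namespace Stmt8Aux

variable {R : Type*} [CommRing R]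

lemma prod_mem_pow {ι : Type*} (Idl : Ideal R) (F : Finset ι) (a : ι → R) (e : ι → ℕ)
    (ha : ∀ t ∈ F, a t ∈ Idl ^ (e t)) : (∏ t ∈ F, a t) ∈ Idl ^ (∑ t ∈ F, e t) := by
  classical
  induction F using Finset.induction with
  | empty => simp [Ideal.one_eq_top]
  | @insert s F' hx ih =>
    rw [Finset.prod_insert hx, Finset.sum_insert hx, pow_add]
    exact Ideal.mul_mem_mul (ha s (Finset.mem_insert_self s F'))
      (ih fun t ht => ha t (Finset.mem_insert_of_mem ht))

lemma prod_sub_prod_mem {ι : Type*} (Idl : Ideal R) (F : Finset ι) (a b : ι → R) (e : ι → ℕ)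
    (ha : ∀ t ∈ F, a t ∈ Idl ^ (e t)) (hb : ∀ t ∈ F, b t ∈ Idl ^ (e t))
    (hab : ∀ t ∈ F, b t - a t ∈ Idl ^ (e t + 1)) :
    (∏ t ∈ F, b t) - (∏ t ∈ F, a t) ∈ Idl ^ ((∑ t ∈ F, e t) + 1) := by
  classical
  induction F using Finset.induction with
  | empty => simp
  | @insert s F' hx ih =>
    rw [Finset.prod_insert hx, Finset.prod_insert hx, Finset.sum_insert hx]
    have key : b s * ∏ t ∈ F', b t - a s * ∏ t ∈ F', a t =
        (b s - a s) * ∏ t ∈ F', b t + a s * ((∏ t ∈ F', b t) - ∏ t ∈ F', a t) := by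
      ring
    rw [key]
    apply Ideal.add_mem
    · have h1 := Ideal.mul_mem_mul (hab s (Finset.mem_insert_self s F'))
        (prod_mem_pow Idl F' b e (fun t ht => hb t (Finset.mem_insert_of_mem ht)))
      rw [← pow_add] at h1
      convert h1 using 2
      omega
    · have h2 := Ideal.mul_mem_mul (ha s (Finset.mem_insert_self s F'))
        (ih (fun t ht => ha t (Finset.mem_insert_of_mem ht))
            (fun t ht => hb t (Finset.mem_insert_of_mem ht))
            (fun t ht => hab t (Finset.mem_insert_of_mem ht)))
      rw [← pow_add] at h2
      rw [add_assoc]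
      exact h2

end Stmt8Aux

namespace Stmt8Aux
variable {σ k : Type*} [Fintype σ] [DecidableEq σ] [CommRing k]

local notation "mId" => Ideal.span (Set.range (X : σ → MvPolynomial σ k))

lemma coeff_single_linsum (c : σ → k) (i : σ) :
    coeff (Finsupp.single i 1) (∑ j, C (c j) * X j) = c i := by
  rw [coeff_sum]
  rw [Finset.sum_eq_single i]
  · simp [coeff_X']
  · intro j _ hj
    simp only [coeff_C_mul, coeff_X']
    rw [if_neg, mul_zero]
    intro h
    exact hj (by
      have := (Finsupp.single_left_inj (one_ne_zero (α := ℕ))).mp h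
      exact this)
  · intro h; exact absurd (Finset.mem_univ i) h

lemma coeff_zero_linsum (c : σ → k) :
    coeff 0 (∑ j, C (c j) * X j) = 0 := by
  rw [coeff_sum]
  apply Finset.sum_eq_zero
  intro j _
  simp [coeff_C_mul, coeff_zero_X]

lemma coeff_eq_zero_of_mem_mPow {f : MvPolynomial σ k} {t : ℕ} (hf : f ∈ (mId) ^ t)
    {s : σ →₀ ℕ} (hs : s.degree < t) : coeff s f = 0 := by
  by_contra h
  have := mem_mPow.mp hf s (mem_support_iff.mpr h)
  omega

lemma linear_decomp {f : MvPolynomial σ k} (hf : constantCoeff f = 0) :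
    f - ∑ i, C (coeff (Finsupp.single i 1) f) * X i ∈ (mId) ^ 2 := by
  rw [mem_mPow]
  intro s hs
  rw [mem_support_iff] at hs
  by_contra hdeg
  push_neg at hdeg
  interval_cases h : s.degree
  · obtain rfl : s = 0 := (Finsupp.degree_eq_zero_iff s).mp h
    rw [coeff_sub, coeff_zero_linsum] at hs
    exact hs (by rw [sub_zero]; exact hf)
  · obtain ⟨i, rfl⟩ := deg_one_eq h
    rw [coeff_sub, coeff_single_linsum, sub_self] at hs
    exact hs rfl

end Stmt8Aux

set_option linter.unusedSectionVars false

namespace Stmt8Aux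
variable {σ k : Type*} [Fintype σ] [DecidableEq σ] [CommRing k]

lemma linform_homog (c : σ → k) : (∑ i, C (c i) * X i).IsHomogeneous 1 := by
  apply IsHomogeneous.sum
  intro i _
  simpa using (isHomogeneous_C σ (c i)).mul (isHomogeneous_X k i)

lemma FB_homog {g : MvPolynomial σ k} {d : ℕ} (hg : g.IsHomogeneous d)
    (B : σ → σ → k) :
    (aeval (fun j => ∑ i, C (B i j) * X i) g).IsHomogeneous d := by
  simpa using hg.aeval (fun j => ∑ i, C (B i j) * X i) (n := 1)
    (fun j => linform_homog fun i => B i j)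

attribute [local instance] MvPolynomial.gradedAlgebra

lemma component_mem {I : Ideal (MvPolynomial σ k)}
    (hhom : ∃ S : Set (MvPolynomial σ k),
        (∀ f ∈ S, ∃ d, f.IsHomogeneous d) ∧ I = Ideal.span S)
    {p : MvPolynomial σ k} (hp : p ∈ I) (d : ℕ) :
    homogeneousComponent d p ∈ I := by
  obtain ⟨S, hS, rfl⟩ := hhom
  have hI : Ideal.IsHomogeneous (homogeneousSubmodule σ k) (Ideal.span S) := by
    apply Ideal.homogeneous_span
    intro x hx
    obtain ⟨e, he⟩ := hS x hx
    exact ⟨e, (mem_homogeneousSubmodule e x).mpr he⟩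
  have := hI d hp
  rwa [← DirectSum.Decomposition.decompose'_eq, decomposition.decompose'_apply] at this

end Stmt8Aux

namespace Stmt8Aux
variable {σ k : Type*} [Fintype σ] [DecidableEq σ] [CommRing k]

local notation "mId" => Ideal.span (Set.range (X : σ → MvPolynomial σ k))

lemma support_degree_eq {g : MvPolynomial σ k} {d : ℕ} (hg : g.IsHomogeneous d)
    {s : σ →₀ ℕ} (hs : s ∈ g.support) : s.degree = d := by
  by_contra h
  exact mem_support_iff.mp hs (hg.coeff_eq_zero h)

lemma sum_univ_eq_degree (s : σ →₀ ℕ) : ∑ i, s i = s.degree := by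
  rw [Finsupp.degree]
  exact (Finset.sum_subset (Finset.subset_univ _)
    (fun i _ hi => Finsupp.notMem_support_iff.mp hi)).symm

lemma pow_sub_pow_mem (x y : MvPolynomial σ k) (hx : x ∈ (mId)) (hy : y ∈ (mId))
    (hxy : y - x ∈ (mId) ^ 2) (c : ℕ) : y ^ c - x ^ c ∈ (mId) ^ (c + 1) := by
  have := prod_sub_prod_mem (mId) (Finset.range c) (fun _ => x) (fun _ => y) (fun _ => 1)
    (fun t _ => by simpa using hx) (fun t _ => by simpa using hy)
    (fun t _ => by simpa using hxy)
  simpa [Finset.prod_const, Finset.card_range] using this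

lemma aeval_sub_aeval_mem {g : MvPolynomial σ k} {d : ℕ} (hg : g.IsHomogeneous d)
    (q q' : σ → MvPolynomial σ k) (hq : ∀ i, q i ∈ (mId)) (hq' : ∀ i, q' i ∈ (mId))
    (hdiff : ∀ i, q' i - q i ∈ (mId) ^ 2) :
    aeval q' g - aeval q g ∈ (mId) ^ (d + 1) := by
  have expand : aeval q' g - aeval q g = ∑ s ∈ g.support,
      (aeval q' (monomial s (coeff s g)) - aeval q (monomial s (coeff s g))) := by
    rw [Finset.sum_sub_distrib, ← map_sum, ← map_sum, support_sum_monomial_coeff]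
  rw [expand]
  apply Ideal.sum_mem
  intro s hs
  rw [aeval_monomial, aeval_monomial, ← mul_sub]
  apply Ideal.mul_mem_left
  have hprod : ∀ r : σ → MvPolynomial σ k,
      (s.prod fun i e => r i ^ e) = ∏ i, r i ^ s i := by
    intro r
    exact Finsupp.prod_fintype s (fun i e => r i ^ e) (fun i => pow_zero (r i))
  rw [hprod, hprod]
  have key := prod_sub_prod_mem (mId) Finset.univ (fun i => q i ^ s i)
    (fun i => q' i ^ s i) (fun i => s i)
    (fun i _ => Ideal.pow_mem_pow (hq i) (s i))
    (fun i _ => Ideal.pow_mem_pow (hq' i) (s i))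
    (fun i _ => pow_sub_pow_mem (q i) (q' i) (hq i) (hq' i) (hdiff i) (s i))
  rwa [sum_univ_eq_degree, support_degree_eq hg hs] at key

lemma homogeneousComponent_eq_zero_of_mem {f : MvPolynomial σ k} {d : ℕ}
    (hf : f ∈ (mId) ^ (d + 1)) : homogeneousComponent d f = 0 := by
  apply homogeneousComponent_eq_zero'
  intro s hs
  have := mem_mPow.mp hf s hs
  omega

end Stmt8Aux

namespace Stmt8Aux
variable {k : Type*} [CommRing k] {n : ℕ}

local notation "mId" => Ideal.span (Set.range (X : Fin n → MvPolynomial (Fin n) k))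

lemma linsum_mem (c : Fin n → k) : (∑ i, C (c i) * X i) ∈ (mId) :=
  Ideal.sum_mem _ fun i _ => Ideal.mul_mem_left _ _ (Ideal.subset_span ⟨i, rfl⟩)

lemma linsum_one (j : Fin n) :
    ∑ i, C ((1 : Matrix (Fin n) (Fin n) k) i j) * X i = X j := by
  rw [Finset.sum_eq_single j]
  · simp [Matrix.one_apply]
  · intro i _ hij; simp [Matrix.one_apply, hij]
  · intro h; exact absurd (Finset.mem_univ j) h

lemma linsum_comp (B Cm : Matrix (Fin n) (Fin n) k) (j : Fin n) :
    ∑ i, C (Cm i j) * (∑ r, C (B r i) * X r) = ∑ r, C ((B * Cm) r j) * X r := by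
  simp_rw [Finset.mul_sum]
  rw [Finset.sum_comm]
  apply Finset.sum_congr rfl
  intro r _
  rw [Matrix.mul_apply, map_sum, Finset.sum_mul]
  apply Finset.sum_congr rfl
  intro i _
  rw [map_mul]
  ring

lemma aeval_linsum_eq (B Cm : Matrix (Fin n) (Fin n) k) (j : Fin n) :
    aeval (fun j' => ∑ i, C (B i j') * X i) (∑ i, C (Cm i j) * X i) =
      ∑ r, C ((B * Cm) r j) * X r := by
  rw [← linsum_comp]
  rw [map_sum]
  apply Finset.sum_congr rfl
  intro i _
  rw [map_mul, aeval_X, aeval_C]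
  rfl

end Stmt8Aux

namespace Stmt8Aux

variable {k : Type*} [Field k] {n : ℕ}

local notation "mId" => Ideal.span (Set.range (X : Fin n → MvPolynomial (Fin n) k))

/-- The linear change of variables associated to a matrix. -/
noncomputable def lin (B : Matrix (Fin n) (Fin n) k) : Fin n → MvPolynomial (Fin n) k :=
  fun j => ∑ i, C (B i j) * X i

lemma lin_apply (B : Matrix (Fin n) (Fin n) k) (j : Fin n) :
    lin B j = ∑ i, C (B i j) * X i := rfl

variable {I : Ideal (MvPolynomial (Fin n) k)} {J : Ideal (MvPolynomial (Fin n) k ⧸ I)}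

lemma J_eq_map (hJ : J = Ideal.span (Set.range fun i => Ideal.Quotient.mk I (X i))) :
    J = Ideal.map (Ideal.Quotient.mk I) (mId) := by
  rw [hJ, Ideal.map_span, ← Set.range_comp]
  rfl

lemma mem_J2_iff (hJ : J = Ideal.span (Set.range fun i => Ideal.Quotient.mk I (X i)))
    (a : MvPolynomial (Fin n) k ⧸ I) :
    a ∈ J ^ 2 ↔ ∃ p ∈ (mId) ^ 2, Ideal.Quotient.mk I p = a := by
  rw [J_eq_map hJ, ← Ideal.map_pow]
  exact Ideal.mem_map_iff_of_surjective _ Ideal.Quotient.mk_surjective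

lemma one_not_mem (hI2 : I ≤ (mId) ^ 2) : (1 : MvPolynomial (Fin n) k) ∉ I := by
  intro h
  have := coeff_eq_zero_of_mem_mPow (hI2 h) (s := 0) (by simp)
  simp at this

lemma const_zero_of_nil (hI2 : I ≤ (mId) ^ 2) {f : MvPolynomial (Fin n) k}
    (hf : IsNilpotent (Ideal.Quotient.mk I f)) : constantCoeff f = 0 := by
  obtain ⟨N, hN⟩ := hf
  have hN0 : N ≠ 0 := by
    rintro rfl
    rw [pow_zero] at hN
    exact one_not_mem hI2 (by
      rw [← Ideal.Quotient.eq_zero_iff_mem, map_one]; exact hN)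
  rw [← map_pow, Ideal.Quotient.eq_zero_iff_mem] at hN
  have h0 : coeff 0 (f ^ N) = 0 :=
    coeff_eq_zero_of_mem_mPow (hI2 hN) (by simp)
  have : constantCoeff (f ^ N) = (constantCoeff f) ^ N := map_pow _ _ _
  rw [constantCoeff_eq] at this
  rw [h0] at this
  exact pow_eq_zero_iff hN0 |>.mp this.symm

lemma mem_m_of_const_zero {f : MvPolynomial (Fin n) k} (hf : constantCoeff f = 0) :
    f ∈ (mId) := by
  have : f ∈ (mId) ^ 1 := by
    rw [mem_mPow]
    intro s hs
    rcases Nat.eq_zero_or_pos s.degree with h | h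
    · obtain rfl := (Finsupp.degree_eq_zero_iff s).mp h
      rw [mem_support_iff] at hs
      exact absurd (by rw [← constantCoeff_eq]; exact hf) hs
    · omega
  rwa [pow_one] at this

lemma nil_mem_J (hI2 : I ≤ (mId) ^ 2)
    (hJ : J = Ideal.span (Set.range fun i => Ideal.Quotient.mk I (X i)))
    {a : MvPolynomial (Fin n) k ⧸ I} (ha : IsNilpotent a) : a ∈ J := by
  obtain ⟨f, rfl⟩ := Ideal.Quotient.mk_surjective a
  rw [J_eq_map hJ]
  exact Ideal.mem_map_of_mem _ (mem_m_of_const_zero (const_zero_of_nil hI2 ha))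

lemma nilpotent_y {l : ℕ} (hl : 2 ≤ l) (hIl : (mId) ^ l ≤ I) (i : Fin n) :
    IsNilpotent (Ideal.Quotient.mk I (X i)) := by
  refine ⟨l, ?_⟩
  rw [← map_pow, Ideal.Quotient.eq_zero_iff_mem]
  exact hIl (Ideal.pow_mem_pow (Ideal.subset_span (Set.mem_range_self i)) l)

lemma mapJ2 (hJ : J = Ideal.span (Set.range fun i => Ideal.Quotient.mk I (X i)))
    (χ : (MvPolynomial (Fin n) k ⧸ I) →ₐ[k] (MvPolynomial (Fin n) k ⧸ I))
    (hχ : ∀ i, χ (Ideal.Quotient.mk I (X i)) ∈ J) {a} (ha : a ∈ J ^ 2) :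
    χ a ∈ J ^ 2 := by
  have h1 : Ideal.map χ.toRingHom J ≤ J := by
    rw [hJ, Ideal.map_span]
    apply Ideal.span_le.mpr
    rintro _ ⟨_, ⟨i, rfl⟩, rfl⟩
    exact hJ ▸ hχ i
  have h2 : χ a ∈ Ideal.map χ.toRingHom (J ^ 2) := Ideal.mem_map_of_mem _ ha
  rw [Ideal.map_pow] at h2
  exact Ideal.pow_right_mono h1 2 h2

end Stmt8Aux

namespace Stmt8Aux

variable {k : Type*} [Field k] {n : ℕ}

local notation "mId" => Ideal.span (Set.range (X : Fin n → MvPolynomial (Fin n) k))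

variable {I : Ideal (MvPolynomial (Fin n) k)} {J : Ideal (MvPolynomial (Fin n) k ⧸ I)}

lemma mk_C (c : k) :
    Ideal.Quotient.mk I (C c) = algebraMap k (MvPolynomial (Fin n) k ⧸ I) c := rfl

lemma exists_mat (hI2 : I ≤ (mId) ^ 2)
    (hJ : J = Ideal.span (Set.range fun i => Ideal.Quotient.mk I (X i)))
    (t : Fin n → MvPolynomial (Fin n) k ⧸ I) (ht : ∀ j, IsNilpotent (t j)) :
    ∃ B : Matrix (Fin n) (Fin n) k,
      ∀ j, t j - Ideal.Quotient.mk I (lin B j) ∈ J ^ 2 := by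
  choose f hf using fun j => Ideal.Quotient.mk_surjective (t j)
  refine ⟨fun i j => coeff (Finsupp.single i 1) (f j), fun j => ?_⟩
  have hconst : constantCoeff (f j) = 0 :=
    const_zero_of_nil hI2 (by rw [hf j]; exact ht j)
  have hd := linear_decomp hconst
  rw [mem_J2_iff hJ]
  exact ⟨_, hd, by rw [RingHom.map_sub, hf j]; rfl⟩

lemma indep (hI2 : I ≤ (mId) ^ 2)
    (hJ : J = Ideal.span (Set.range fun i => Ideal.Quotient.mk I (X i)))
    {c : Fin n → k} (hc : Ideal.Quotient.mk I (∑ i, C (c i) * X i) ∈ J ^ 2) :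
    ∀ i, c i = 0 := by
  intro i
  obtain ⟨p, hp, hpq⟩ := (mem_J2_iff hJ _).mp hc
  have hdiff : (∑ i, C (c i) * X i) - p ∈ I := by
    rw [← Ideal.Quotient.eq_zero_iff_mem, map_sub, hpq, sub_self]
  have hmem : (∑ i, C (c i) * X i) ∈ (mId) ^ 2 := by
    have := Ideal.add_mem _ (hI2 hdiff) hp
    rwa [sub_add_cancel] at this
  have := coeff_eq_zero_of_mem_mPow hmem (s := Finsupp.single i 1) (by rw [deg_single]; omega)
  rwa [coeff_single_linsum] at this

lemma mat_unique (hI2 : I ≤ (mId) ^ 2)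
    (hJ : J = Ideal.span (Set.range fun i => Ideal.Quotient.mk I (X i)))
    {t : Fin n → MvPolynomial (Fin n) k ⧸ I} {B B' : Matrix (Fin n) (Fin n) k}
    (hB : ∀ j, t j - Ideal.Quotient.mk I (lin B j) ∈ J ^ 2)
    (hB' : ∀ j, t j - Ideal.Quotient.mk I (lin B' j) ∈ J ^ 2) : B = B' := by
  ext i j
  have hsub : Ideal.Quotient.mk I (∑ r, C (B r j - B' r j) * X r) ∈ J ^ 2 := by
    have := Ideal.sub_mem _ (hB' j) (hB j)
    rw [sub_sub_sub_cancel_left, ← map_sub, lin_apply, lin_apply, ← Finset.sum_sub_distrib] at this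
    convert this using 3
    rw [map_sub, sub_mul]
  have := indep hI2 hJ hsub i
  exact sub_eq_zero.mp this

lemma comp_mat {l : ℕ} (hl : 2 ≤ l) (hI2 : I ≤ (mId) ^ 2) (hIl : (mId) ^ l ≤ I)
    (hJ : J = Ideal.span (Set.range fun i => Ideal.Quotient.mk I (X i)))
    (ψ χ : (MvPolynomial (Fin n) k ⧸ I) ≃ₐ[k] (MvPolynomial (Fin n) k ⧸ I))
    (B Cm : Matrix (Fin n) (Fin n) k)
    (hB : ∀ j, ψ (Ideal.Quotient.mk I (X j)) - Ideal.Quotient.mk I (lin B j) ∈ J ^ 2)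
    (hC : ∀ j, χ (Ideal.Quotient.mk I (X j)) - Ideal.Quotient.mk I (lin Cm j) ∈ J ^ 2)
    (j : Fin n) :
    ψ (χ (Ideal.Quotient.mk I (X j))) - Ideal.Quotient.mk I (lin (B * Cm) j) ∈ J ^ 2 := by
  have hψJ2 : ∀ a ∈ J ^ 2, ψ a ∈ J ^ 2 := fun a ha =>
    mapJ2 hJ ψ.toAlgHom (fun i => nil_mem_J hI2 hJ ((nilpotent_y hl hIl i).map ψ)) ha
  have key : ψ (χ (Ideal.Quotient.mk I (X j))) - Ideal.Quotient.mk I (lin (B * Cm) j) =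
      ψ (χ (Ideal.Quotient.mk I (X j)) - Ideal.Quotient.mk I (lin Cm j))
      + (∑ i, algebraMap k _ (Cm i j) *
          (ψ (Ideal.Quotient.mk I (X i)) - Ideal.Quotient.mk I (lin B i))) := by
    rw [map_sub]
    have h1 : ψ (Ideal.Quotient.mk I (lin Cm j)) =
        ∑ i, algebraMap k _ (Cm i j) * ψ (Ideal.Quotient.mk I (X i)) := by
      rw [lin_apply, map_sum (Ideal.Quotient.mk I), map_sum ψ]
      apply Finset.sum_congr rfl
      intro i _
      rw [map_mul, map_mul]
      congr 1
      rw [mk_C]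
      exact ψ.commutes (Cm i j)
    have h2 : (Ideal.Quotient.mk I (lin (B * Cm) j)) =
        ∑ i, algebraMap k _ (Cm i j) * Ideal.Quotient.mk I (lin B i) := by
      rw [lin_apply, ← linsum_comp B Cm j, map_sum (Ideal.Quotient.mk I)]
      apply Finset.sum_congr rfl
      intro i _
      rw [map_mul, lin_apply, mk_C]
    rw [h1, h2]
    simp_rw [mul_sub]
    rw [Finset.sum_sub_distrib, sub_add_sub_cancel]
  rw [key]
  exact Ideal.add_mem _ (hψJ2 _ (hC j))
    (Ideal.sum_mem _ fun i _ => Ideal.mul_mem_left _ _ (hB i))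

end Stmt8Aux

namespace Stmt8Aux

variable {k : Type*} [Field k] {n : ℕ}

local notation "mId" => Ideal.span (Set.range (X : Fin n → MvPolynomial (Fin n) k))

variable {I : Ideal (MvPolynomial (Fin n) k)} {J : Ideal (MvPolynomial (Fin n) k ⧸ I)}

lemma mk_aeval (r : Fin n → MvPolynomial (Fin n) k) (f : MvPolynomial (Fin n) k) :
    Ideal.Quotient.mk I (aeval r f) =
      aeval (fun i => Ideal.Quotient.mk I (r i)) f := by
  have := MvPolynomial.comp_aeval (f := r) (φ := Ideal.Quotient.mkₐ k I)
  have h2 := AlgHom.congr_fun this f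
  simpa [Ideal.Quotient.mkₐ_eq_mk] using h2

lemma psi_mk_eq (ψ : (MvPolynomial (Fin n) k ⧸ I) ≃ₐ[k] (MvPolynomial (Fin n) k ⧸ I))
    (g : MvPolynomial (Fin n) k) :
    ψ (Ideal.Quotient.mk I g) =
      aeval (fun i => ψ (Ideal.Quotient.mk I (X i))) g := by
  have : ψ.toAlgHom.comp (Ideal.Quotient.mkₐ k I) =
      aeval (fun i => ψ (Ideal.Quotient.mk I (X i))) := by
    apply MvPolynomial.algHom_ext
    intro i
    simp [Ideal.Quotient.mkₐ_eq_mk]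
  have h2 := AlgHom.congr_fun this g
  simpa [Ideal.Quotient.mkₐ_eq_mk] using h2

lemma invariance (hI2 : I ≤ (mId) ^ 2)
    (hhom : ∃ S : Set (MvPolynomial (Fin n) k),
        (∀ f ∈ S, ∃ d, f.IsHomogeneous d) ∧ I = Ideal.span S)
    (hJ : J = Ideal.span (Set.range fun i => Ideal.Quotient.mk I (X i)))
    (ψ : (MvPolynomial (Fin n) k ⧸ I) ≃ₐ[k] (MvPolynomial (Fin n) k ⧸ I))
    (B : Matrix (Fin n) (Fin n) k)
    (hB : ∀ j, ψ (Ideal.Quotient.mk I (X j)) - Ideal.Quotient.mk I (lin B j) ∈ J ^ 2) :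
    ∀ g ∈ I, aeval (lin B) g ∈ I := by
  obtain ⟨S, hShom, hIS⟩ := hhom
  have hgen : ∀ g ∈ S, aeval (lin B) g ∈ I := by
    intro g hgS
    obtain ⟨d, hg⟩ := hShom g hgS
    have hex : ∀ i, ∃ p ∈ (mId) ^ 2,
        Ideal.Quotient.mk I p = ψ (Ideal.Quotient.mk I (X i)) - Ideal.Quotient.mk I (lin B i) :=
      fun i => (mem_J2_iff hJ _).mp (hB i)
    choose p hp hpeq using hex
    have hmkq' : ∀ i, Ideal.Quotient.mk I (lin B i + p i) = ψ (Ideal.Quotient.mk I (X i)) := by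
      intro i
      rw [RingHom.map_add, hpeq]
      ring
    have hgI : g ∈ I := hIS ▸ Ideal.subset_span hgS
    have hIg : aeval (fun i => lin B i + p i) g ∈ I := by
      rw [← Ideal.Quotient.eq_zero_iff_mem, mk_aeval]
      have : (fun i => Ideal.Quotient.mk I (lin B i + p i)) =
          fun i => ψ (Ideal.Quotient.mk I (X i)) := funext hmkq'
      rw [this, ← psi_mk_eq, Ideal.Quotient.eq_zero_iff_mem.mpr hgI, map_zero]
    have hdiff : aeval (fun i => lin B i + p i) g - aeval (lin B) g ∈ (mId) ^ (d + 1) := by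
      apply aeval_sub_aeval_mem hg
      · intro i; rw [lin_apply]; exact linsum_mem _
      · intro i
        exact Ideal.add_mem _ (by rw [lin_apply]; exact linsum_mem _)
          (Ideal.pow_le_self two_ne_zero (hp i))
      · intro i
        rw [add_sub_cancel_left]
        exact hp i
    have hhomFB : (aeval (lin B) g).IsHomogeneous d := FB_homog hg B
    have hcomp : homogeneousComponent d (aeval (fun i => lin B i + p i) g) =
        aeval (lin B) g := by
      have e1 : aeval (fun i => lin B i + p i) g =
          aeval (lin B) g + (aeval (fun i => lin B i + p i) g - aeval (lin B) g) := by ring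
      rw [e1, map_add, homogeneousComponent_eq_zero_of_mem hdiff, add_zero,
        homogeneousComponent_of_mem ((mem_homogeneousSubmodule _ _).mpr hhomFB), if_pos rfl]
    rw [← hcomp]
    exact component_mem ⟨S, hShom, hIS⟩ hIg d
  intro g hg
  have hmap : Ideal.map (↑(aeval (lin B) : MvPolynomial (Fin n) k →ₐ[k] MvPolynomial (Fin n) k)
      : MvPolynomial (Fin n) k →+* MvPolynomial (Fin n) k) I ≤ I := by
    conv_lhs => rw [hIS]
    rw [Ideal.map_span, Ideal.span_le]
    rintro _ ⟨x, hx, rfl⟩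
    exact hgen x hx
  exact hmap (Ideal.mem_map_of_mem _ hg)

end Stmt8Aux

namespace Stmt8Aux

variable {k : Type*} [Field k] {n : ℕ}

/-- The algebra endomorphism of the quotient induced by a linear change of variables
preserving `I`. -/
noncomputable def bar (I : Ideal (MvPolynomial (Fin n) k)) (B : Matrix (Fin n) (Fin n) k)
    (hB : ∀ g ∈ I, aeval (lin B) g ∈ I) :
    (MvPolynomial (Fin n) k ⧸ I) →ₐ[k] (MvPolynomial (Fin n) k ⧸ I) :=
  Ideal.Quotient.liftₐ I ((Ideal.Quotient.mkₐ k I).comp (aeval (lin B)))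
    (fun a ha => by
      simp only [AlgHom.comp_apply, Ideal.Quotient.mkₐ_eq_mk]
      rw [Ideal.Quotient.eq_zero_iff_mem]
      exact hB a ha)

lemma bar_mk (I : Ideal (MvPolynomial (Fin n) k)) (B : Matrix (Fin n) (Fin n) k)
    (hB : ∀ g ∈ I, aeval (lin B) g ∈ I) (f : MvPolynomial (Fin n) k) :
    bar I B hB (Ideal.Quotient.mk I f) = Ideal.Quotient.mk I (aeval (lin B) f) := by
  simp [bar, Ideal.Quotient.liftₐ_apply, Ideal.Quotient.mkₐ_eq_mk]
  rfl

lemma bar_comp_eq (I : Ideal (MvPolynomial (Fin n) k)) (B C : Matrix (Fin n) (Fin n) k)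
    (hB : ∀ g ∈ I, aeval (lin B) g ∈ I) (hC : ∀ g ∈ I, aeval (lin C) g ∈ I)
    (hBC : B * C = 1) :
    (bar I B hB).comp (bar I C hC) = AlgHom.id k _ := by
  apply Ideal.Quotient.algHom_ext
  apply MvPolynomial.algHom_ext
  intro j
  simp only [AlgHom.comp_apply, Ideal.Quotient.mkₐ_eq_mk, AlgHom.id_apply]
  rw [bar_mk, aeval_X, bar_mk]
  rw [show aeval (lin B) (lin C j) = X j from by
    rw [lin_apply C, show lin B = (fun j' => ∑ i, MvPolynomial.C (B i j') * X i) from rfl,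
      aeval_linsum_eq, hBC, linsum_one]]

end Stmt8Aux


set_option maxHeartbeats 1000000
open Stmt8Aux

/-- paper's Proposition 5.4: `Aut_k(A) ≅ Im(Φ_A) ⋉ Ker(Φ_A)`. Let `I` be a
homogeneous ideal of `k[X_1,…,X_n]` with `⟨X_1,…,X_n⟩^l ⊆ I ⊆ ⟨X_1,…,X_n⟩²` (`n ≥ 1`,
`l ≥ 2`), let `A = k[X_1,…,X_n]/I`, `x_i = X_i + I`, and let `J` be the ideal of `A` generated
by the `x_i`.  Then every `k`-algebra automorphism `φ` of `A` factors uniquely as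
`φ = φ_M ∘ u`, where `M ∈ GL_n(k)` satisfies `F_M(I) ⊆ I`, `φ_M` is induced by the linear
change of variables `F_M`, and `u` is an automorphism with `u(x_i) - x_i ∈ J²` for all `i`. -/
theorem stmt_8 (k : Type*) [Field k] (n l : ℕ) (hn : 1 ≤ n) (hl : 2 ≤ l)
    (I : Ideal (MvPolynomial (Fin n) k))
    (hhom : ∃ S : Set (MvPolynomial (Fin n) k),
        (∀ f ∈ S, ∃ d, f.IsHomogeneous d) ∧ I = Ideal.span S)
    (hIl : (Ideal.span (Set.range (X : Fin n → MvPolynomial (Fin n) k))) ^ l ≤ I)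
    (hI2 : I ≤ (Ideal.span (Set.range (X : Fin n → MvPolynomial (Fin n) k))) ^ 2)
    (J : Ideal (MvPolynomial (Fin n) k ⧸ I))
    (hJ : J = Ideal.span (Set.range fun i => Ideal.Quotient.mk I (X i))) :
    ∀ φ : (MvPolynomial (Fin n) k ⧸ I) ≃ₐ[k] (MvPolynomial (Fin n) k ⧸ I),
      ∃! Mu : GL (Fin n) k × ((MvPolynomial (Fin n) k ⧸ I) ≃ₐ[k] (MvPolynomial (Fin n) k ⧸ I)),
        (∀ g ∈ I,
            aeval (fun j => ∑ i, C ((Mu.1 : Matrix (Fin n) (Fin n) k) i j) * X i) g ∈ I) ∧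
        (∀ i : Fin n,
            Mu.2 (Ideal.Quotient.mk I (X i)) - Ideal.Quotient.mk I (X i) ∈ J ^ 2) ∧
        (∀ f : MvPolynomial (Fin n) k,
            φ (Mu.2.symm (Ideal.Quotient.mk I f)) =
              Ideal.Quotient.mk I
                (aeval (fun j => ∑ i, C ((Mu.1 : Matrix (Fin n) (Fin n) k) i j) * X i) f)) := by
  classical
  intro φ
  have hnil : ∀ (ψ : (MvPolynomial (Fin n) k ⧸ I) ≃ₐ[k] (MvPolynomial (Fin n) k ⧸ I)) (i : Fin n),
      IsNilpotent (ψ (Ideal.Quotient.mk I (X i))) :=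
    fun ψ i => (nilpotent_y hl hIl i).map ψ
  obtain ⟨M, hM⟩ := exists_mat hI2 hJ (fun i => φ (Ideal.Quotient.mk I (X i)))
    (fun i => hnil φ i)
  obtain ⟨N, hN⟩ := exists_mat hI2 hJ (fun i => φ.symm (Ideal.Quotient.mk I (X i)))
    (fun i => hnil φ.symm i)
  have hid : ∀ j, (Ideal.Quotient.mk I (X j)) -
      Ideal.Quotient.mk I (lin (1 : Matrix (Fin n) (Fin n) k) j) ∈ J ^ 2 := by
    intro j
    rw [lin_apply, linsum_one, sub_self]
    exact zero_mem _
  have hMN : M * N = 1 := by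
    refine mat_unique hI2 hJ (t := fun j => Ideal.Quotient.mk I (X j)) (fun j => ?_) hid
    have := comp_mat hl hI2 hIl hJ φ φ.symm M N hM hN j
    rwa [AlgEquiv.apply_symm_apply] at this
  have hNM : N * M = 1 := by
    refine mat_unique hI2 hJ (t := fun j => Ideal.Quotient.mk I (X j)) (fun j => ?_) hid
    have := comp_mat hl hI2 hIl hJ φ.symm φ N M hN hM j
    rwa [AlgEquiv.symm_apply_apply] at this
  have hMinv : ∀ g ∈ I, aeval (lin M) g ∈ I := invariance hI2 hhom hJ φ M hM
  have hNinv : ∀ g ∈ I, aeval (lin N) g ∈ I := invariance hI2 hhom hJ φ.symm N hN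
  have hcomp1 := bar_comp_eq I M N hMinv hNinv hMN
  have hcomp2 := bar_comp_eq I N M hNinv hMinv hNM
  set e : (MvPolynomial (Fin n) k ⧸ I) ≃ₐ[k] (MvPolynomial (Fin n) k ⧸ I) :=
    AlgEquiv.ofAlgHom (bar I M hMinv) (bar I N hNinv) hcomp1 hcomp2 with he
  set u : (MvPolynomial (Fin n) k ⧸ I) ≃ₐ[k] (MvPolynomial (Fin n) k ⧸ I) :=
    φ.trans e.symm with hu
  have hesymm : ∀ a, e.symm a = bar I N hNinv a := fun a => rfl
  have heapp : ∀ a, e a = bar I M hMinv a := fun a => rfl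
  have hbarNJ : ∀ a ∈ J ^ 2, bar I N hNinv a ∈ J ^ 2 := by
    intro a ha
    refine mapJ2 hJ (bar I N hNinv) (fun i => ?_) ha
    rw [bar_mk, aeval_X]
    rw [J_eq_map hJ]
    exact Ideal.mem_map_of_mem _ (by rw [lin_apply]; exact linsum_mem _)
  have hu3 : ∀ f : MvPolynomial (Fin n) k,
      φ (u.symm (Ideal.Quotient.mk I f)) = Ideal.Quotient.mk I (aeval (lin M) f) := by
    intro f
    have h1 : u.symm (Ideal.Quotient.mk I f) = φ.symm (e (Ideal.Quotient.mk I f)) := by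
      rw [hu, AlgEquiv.symm_trans_apply, AlgEquiv.symm_symm]
    rw [h1, AlgEquiv.apply_symm_apply, heapp, bar_mk]
  have hu2 : ∀ i : Fin n,
      u (Ideal.Quotient.mk I (X i)) - Ideal.Quotient.mk I (X i) ∈ J ^ 2 := by
    intro i
    have h1 : u (Ideal.Quotient.mk I (X i)) =
        bar I N hNinv (φ (Ideal.Quotient.mk I (X i))) := by
      rw [hu]; rfl
    have hsplit : φ (Ideal.Quotient.mk I (X i)) =
        Ideal.Quotient.mk I (lin M i) +
          (φ (Ideal.Quotient.mk I (X i)) - Ideal.Quotient.mk I (lin M i)) := by ring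
    have hbase : bar I N hNinv (Ideal.Quotient.mk I (lin M i)) =
        Ideal.Quotient.mk I (X i) := by
      rw [bar_mk]
      congr 1
      rw [lin_apply M, show lin N = (fun j' => ∑ r, C (N r j') * X r) from rfl,
        aeval_linsum_eq, hNM, linsum_one]
    rw [h1, hsplit, map_add, hbase, add_sub_cancel_left]
    exact hbarNJ _ (hM i)
  refine ⟨(⟨M, N, hMN, hNM⟩, u), ⟨hMinv, hu2, hu3⟩, ?_⟩
  rintro ⟨M₂, u₂⟩ ⟨hc1, hc2, hc3⟩
  have hstep : ∀ j, φ (Ideal.Quotient.mk I (X j)) -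
      Ideal.Quotient.mk I (lin (M₂ : Matrix (Fin n) (Fin n) k) j) ∈ J ^ 2 := by
    intro j
    have h3j := hc3 (X j)
    rw [aeval_X] at h3j
    have hd1 : Ideal.Quotient.mk I (X j) - u₂.symm (Ideal.Quotient.mk I (X j)) ∈ J ^ 2 := by
      have h := mapJ2 hJ u₂.symm.toAlgHom
        (fun i => nil_mem_J hI2 hJ (hnil u₂.symm i)) (hc2 j)
      rw [AlgEquiv.toAlgHom_eq_coe] at h
      have heq : u₂.symm (u₂ (Ideal.Quotient.mk I (X j)) - Ideal.Quotient.mk I (X j)) =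
          Ideal.Quotient.mk I (X j) - u₂.symm (Ideal.Quotient.mk I (X j)) := by
        rw [map_sub, AlgEquiv.symm_apply_apply]
      rw [← heq]
      exact h
    have hkey : φ (Ideal.Quotient.mk I (X j)) -
        Ideal.Quotient.mk I (lin (M₂ : Matrix (Fin n) (Fin n) k) j) =
        φ (Ideal.Quotient.mk I (X j) - u₂.symm (Ideal.Quotient.mk I (X j))) := by
      rw [map_sub, h3j, lin_apply]
    rw [hkey]
    exact mapJ2 hJ φ.toAlgHom (fun i => nil_mem_J hI2 hJ (hnil φ i)) hd1
  have hM₂ : (M₂ : Matrix (Fin n) (Fin n) k) = M :=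
    mat_unique hI2 hJ (t := fun j => φ (Ideal.Quotient.mk I (X j))) hstep hM
  have hM₂' : M₂ = (⟨M, N, hMN, hNM⟩ : GL (Fin n) k) := Units.ext hM₂
  have hu₂ : u₂ = u := by
    have hsymm : u₂.symm = u.symm := by
      apply AlgEquiv.ext
      intro a
      obtain ⟨f, rfl⟩ := Ideal.Quotient.mk_surjective a
      apply φ.injective
      rw [hu3 f]
      have := hc3 f
      rw [hM₂] at this
      rw [this]
      rfl
    have := congrArg AlgEquiv.symm hsymm
    rwa [AlgEquiv.symm_symm, AlgEquiv.symm_symm] at this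
  rw [Prod.ext_iff]
  exact ⟨hM₂', hu₂⟩
end

section
/- Let k be a field, n ≥ 1, and let f be a nonzero homogeneous polynomial in k[X_1,…,X_n] of degree d with 2 ≤ d < l. Set I = ⟨X_1,…,X_n⟩^l + ⟨f⟩, A = k[X_1,…,X_n]/I, write x_i = X_i + I, and let J be the ideal of A generated by x_1,…,x_n. Then every k-algebra automorphism φ of A factors uniquely as φ = φ_M ∘ u, where M ∈ GL_n(k) satisfies F_M(f) = α·f for some α ∈ k^×, φ_M is the automorphism of A induced by F_M, and u is a k-algebra automorphism of A with u(x_i) − x_i ∈ J² for every i. -/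
open MvPolynomial

namespace Stmt9Aux

open Ideal

variable {k : Type*} [Field k] {n : ℕ}

/-- The linear substitution algebra endomorphism attached to a matrix. -/
noncomputable def FM (M : Matrix (Fin n) (Fin n) k) :
    MvPolynomial (Fin n) k →ₐ[k] MvPolynomial (Fin n) k :=
  aeval fun j => ∑ i, C (M i j) * X i

lemma FM_X (M : Matrix (Fin n) (Fin n) k) (j : Fin n) :
    FM M (X j) = ∑ i, C (M i j) * X i := aeval_X _ _

lemma FM_comp (M N : Matrix (Fin n) (Fin n) k) :
    (FM M).comp (FM N) = FM (M * N) := by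
  apply MvPolynomial.algHom_ext
  intro j
  simp only [AlgHom.comp_apply, FM_X, map_sum]
  have h1 : ∀ i, (FM M) (C (N i j) * X i) = ∑ m, C (M m i * N i j) * X m := by
    intro i
    rw [_root_.map_mul, FM_X]
    have hc : (FM M) (C (N i j)) = C (N i j) := by
      simp [FM, algebraMap_eq]
    rw [hc, Finset.mul_sum]
    exact Finset.sum_congr rfl fun m _ => by rw [C_mul]; ring
  simp only [h1, Matrix.mul_apply]
  rw [Finset.sum_comm]
  refine Finset.sum_congr rfl fun m _ => ?_
  rw [map_sum C, Finset.sum_mul]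

lemma FM_one : FM (1 : Matrix (Fin n) (Fin n) k) = AlgHom.id k _ := by
  apply MvPolynomial.algHom_ext
  intro j
  simp [FM_X, Matrix.one_apply, Finset.sum_ite_eq', apply_ite C]

/-- The ideal generated by the variables. -/
noncomputable def XI (k : Type*) [Field k] (n : ℕ) : Ideal (MvPolynomial (Fin n) k) :=
  Ideal.span (Set.range X)

lemma X_mem_XI (i : Fin n) : (X i : MvPolynomial (Fin n) k) ∈ XI k n :=
  Ideal.subset_span ⟨i, rfl⟩

lemma FM_X_mem (M : Matrix (Fin n) (Fin n) k) (j : Fin n) :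
    FM M (X j) ∈ XI k n := by
  rw [FM_X]
  exact Ideal.sum_mem _ fun i _ => Ideal.mul_mem_left _ _ (X_mem_XI i)

lemma constantCoeff_eq_zero_of_mem_XI {p : MvPolynomial (Fin n) k} (hp : p ∈ XI k n) :
    constantCoeff p = 0 := by
  have h : XI k n ≤ RingHom.ker (constantCoeff (R := k) (σ := Fin n)) := by
    rw [XI, Ideal.span_le]
    rintro _ ⟨i, rfl⟩
    simp [RingHom.mem_ker]
  exact h hp

lemma degree_add (u v : Fin n →₀ ℕ) : (u + v).degree = u.degree + v.degree := by
  simp only [Finsupp.degree_eq_weight_one]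
  exact map_add _ _ _

lemma coeff_eq_zero_of_mem_XI_pow :
    ∀ (m : ℕ) (p : MvPolynomial (Fin n) k), p ∈ XI k n ^ m →
      ∀ s : Fin n →₀ ℕ, s.degree < m → coeff s p = 0 := by
  intro m
  induction m with
  | zero => intro p _ s hs; omega
  | succ m ih =>
    intro p hp
    rw [pow_succ] at hp
    induction hp using Submodule.mul_induction_on' with
    | mem_mul_mem a ha b hb =>
      intro s hs
      rw [coeff_mul]
      apply Finset.sum_eq_zero
      rintro ⟨u, v⟩ huv
      rw [Finset.HasAntidiagonal.mem_antidiagonal] at huv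
      have hdeg : u.degree + v.degree = s.degree := by rw [← huv]; exact (degree_add u v).symm
      rcases Nat.eq_zero_or_pos v.degree with hv | hv
      · have hv0 : v = 0 := (Finsupp.degree_eq_zero_iff v).mp hv
        have hb0 : coeff v b = 0 := by
          rw [hv0, ← constantCoeff_eq_zero_of_mem_XI hb, constantCoeff_eq]
        simp only [hb0, mul_zero]
      · have : u.degree < m := by omega
        simp only [ih a ha u this, zero_mul]
    | add x hx y hy hx' hy' =>
      intro s hs
      rw [coeff_add, hx' s hs, hy' s hs, add_zero]

lemma monomial_mem_XI_pow {s : Fin n →₀ ℕ} (c : k) {m : ℕ} (hm : m ≤ s.degree) :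
    monomial s c ∈ XI k n ^ m := by
  have hprod : ∀ t : Finset (Fin n), (∏ i ∈ t, (X i : MvPolynomial (Fin n) k) ^ s i)
      ∈ XI k n ^ (∑ i ∈ t, s i) := by
    intro t
    induction t using Finset.induction with
    | empty => simp [Ideal.one_eq_top]
    | insert _ _ hnot ih =>
      rw [Finset.prod_insert hnot, Finset.sum_insert hnot, pow_add]
      exact Ideal.mul_mem_mul (Ideal.pow_mem_pow (X_mem_XI _) _) ih
  have h2 := hprod s.support
  rw [monomial_eq]
  refine Ideal.mul_mem_left _ _ ?_
  have h3 : Finsupp.prod s (fun i e => (X i : MvPolynomial (Fin n) k) ^ e)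
      = ∏ i ∈ s.support, (X i) ^ s i := rfl
  rw [h3]
  exact Ideal.pow_le_pow_right hm h2

lemma mem_XI_pow_of_coeff {p : MvPolynomial (Fin n) k} {m : ℕ}
    (h : ∀ s : Fin n →₀ ℕ, s.degree < m → coeff s p = 0) : p ∈ XI k n ^ m := by
  rw [p.as_sum]
  refine Ideal.sum_mem _ fun v hv => ?_
  rcases lt_or_ge v.degree m with hlt | hle
  · rw [h v hlt]; simp
  · exact monomial_mem_XI_pow _ hle

lemma mem_XI_of_constantCoeff {p : MvPolynomial (Fin n) k} (h : constantCoeff p = 0) :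
    p ∈ XI k n := by
  have := mem_XI_pow_of_coeff (p := p) (m := 1) (fun s hs => by
    have hs0 : s = 0 := (Finsupp.degree_eq_zero_iff s).mp (by omega)
    rw [hs0, ← constantCoeff_eq]
    exact h)
  rwa [pow_one] at this

lemma isHomogeneous_mem_XI_pow {p : MvPolynomial (Fin n) k} {d m : ℕ}
    (hp : p.IsHomogeneous d) (hm : m ≤ d) : p ∈ XI k n ^ m :=
  mem_XI_pow_of_coeff fun s hs => hp.coeff_eq_zero (by omega)

lemma degree_eq_one_iff {s : Fin n →₀ ℕ} (h : s.degree = 1) :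
    ∃ i, s = Finsupp.single i 1 := by
  have hne : s ≠ 0 := by
    intro h0; rw [h0, map_zero] at h; omega
  obtain ⟨i, hi⟩ := Finsupp.support_nonempty_iff.mpr hne
  have hcard : s.support.card ≤ s.degree := by
    rw [Finsupp.degree, Finset.card_eq_sum_ones]
    exact Finset.sum_le_sum fun a ha => Nat.one_le_iff_ne_zero.mpr (Finsupp.mem_support_iff.mp ha)
  have hcard1 : s.support.card = 1 := by
    have : 1 ≤ s.support.card := Finset.card_pos.mpr ⟨i, hi⟩
    omega
  obtain ⟨a, ha⟩ := Finset.card_eq_one.mp hcard1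
  obtain ⟨hne', hs⟩ := Finsupp.support_eq_singleton.mp ha
  have hsa : s a = 1 := by
    have h' := h
    rw [Finsupp.degree_apply, ha, Finset.sum_singleton] at h'
    exact h'
  exact ⟨a, by rw [hs, hsa]⟩

lemma degree_single (i : Fin n) : (Finsupp.single i 1 : Fin n →₀ ℕ).degree = 1 := by
  rw [Finsupp.degree_apply, Finsupp.support_single_ne_zero _ one_ne_zero, Finset.sum_singleton,
    Finsupp.single_eq_same]

/-- triple: both in `I^r`, difference in `I^(r+1)` -/
def Trip {R : Type*} [CommRing R] (I : Ideal R) (r : ℕ) (a a' : R) : Prop :=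
  a ∈ I ^ r ∧ a' ∈ I ^ r ∧ a - a' ∈ I ^ (r + 1)

lemma Trip.mul {R : Type*} [CommRing R] {I : Ideal R} {r s : ℕ} {a a' b b' : R}
    (ha : Trip I r a a') (hb : Trip I s b b') : Trip I (r + s) (a * b) (a' * b') := by
  obtain ⟨ha1, ha2, ha3⟩ := ha
  obtain ⟨hb1, hb2, hb3⟩ := hb
  refine ⟨by rw [pow_add]; exact Ideal.mul_mem_mul ha1 hb1,
          by rw [pow_add]; exact Ideal.mul_mem_mul ha2 hb2, ?_⟩
  have key : a * b - a' * b' = (a - a') * b + a' * (b - b') := by ring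
  rw [key]
  refine Submodule.add_mem _ ?_ ?_
  · have h : (r + s + 1) = (r + 1) + s := by omega
    rw [h, pow_add]; exact Ideal.mul_mem_mul ha3 hb1
  · have h : (r + s + 1) = r + (s + 1) := by omega
    rw [h, pow_add]; exact Ideal.mul_mem_mul ha2 hb3

lemma Trip.one {R : Type*} [CommRing R] (I : Ideal R) : Trip I 0 1 1 :=
  ⟨by simp [Ideal.one_eq_top], by simp [Ideal.one_eq_top], by simp⟩

lemma Trip.pow {R : Type*} [CommRing R] {I : Ideal R} {r : ℕ} {a a' : R}
    (ha : Trip I r a a') (e : ℕ) : Trip I (r * e) (a ^ e) (a' ^ e) := by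
  induction e with
  | zero => simpa using Trip.one I
  | succ e ih =>
    have h2 := ih.mul ha
    rw [pow_succ, pow_succ]
    have h3 : r * e + r = r * (e + 1) := by ring
    rwa [h3] at h2

lemma Trip.prod {ι : Type*} [DecidableEq ι] {R : Type*} [CommRing R] {I : Ideal R}
    (t : Finset ι) (r : ι → ℕ) (a a' : ι → R)
    (h : ∀ i ∈ t, Trip I (r i) (a i) (a' i)) :
    Trip I (∑ i ∈ t, r i) (∏ i ∈ t, a i) (∏ i ∈ t, a' i) := by
  induction t using Finset.induction with
  | empty => simpa using Trip.one I
  | @insert j t hnot ih =>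
    rw [Finset.prod_insert hnot, Finset.prod_insert hnot, Finset.sum_insert hnot]
    exact (h j (Finset.mem_insert_self _ _)).mul
      (ih fun i hi => h i (Finset.mem_insert_of_mem hi))

lemma aeval_sub_mem {d : ℕ} {f : MvPolynomial (Fin n) k} (hf : f.IsHomogeneous d)
    (g h : Fin n → MvPolynomial (Fin n) k)
    (hg : ∀ j, g j ∈ XI k n) (hh : ∀ j, h j ∈ XI k n)
    (hgh : ∀ j, g j - h j ∈ XI k n ^ 2) :
    aeval g f - aeval h f ∈ XI k n ^ (d + 1) := by
  rw [f.as_sum, map_sum, map_sum, ← Finset.sum_sub_distrib]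
  refine Ideal.sum_mem _ fun s hs => ?_
  have hdeg : s.degree = d := by
    rw [Finsupp.degree_eq_weight_one]
    exact hf (Finsupp.mem_support_iff.mp hs)
  rw [aeval_monomial, aeval_monomial, ← mul_sub]
  refine Ideal.mul_mem_left _ _ ?_
  have Tj : ∀ j, Trip (XI k n) 1 (g j) (h j) := fun j =>
    ⟨by simpa [pow_one] using hg j, by simpa [pow_one] using hh j, hgh j⟩
  have T := Trip.prod s.support (fun i => 1 * s i) (fun i => g i ^ s i) (fun i => h i ^ s i)
    (fun i _ => (Tj i).pow (s i))
  have hsum : ∑ i ∈ s.support, 1 * s i = d := by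
    simpa [one_mul, Finsupp.degree_apply] using hdeg
  rw [hsum] at T
  have hp1 : Finsupp.prod s (fun i e => g i ^ e) = ∏ i ∈ s.support, g i ^ s i := rfl
  have hp2 : Finsupp.prod s (fun i e => h i ^ e) = ∏ i ∈ s.support, h i ^ s i := rfl
  rw [hp1, hp2]
  exact T.2.2

lemma homogeneousComponent_of_isHomogeneous {p : MvPolynomial (Fin n) k} {d : ℕ}
    (hp : p.IsHomogeneous d) : homogeneousComponent d p = p := by
  ext s
  rw [coeff_homogeneousComponent]
  split_ifs with h
  · rfl
  · exact (hp.coeff_eq_zero h).symm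

lemma homogeneousComponent_eq_zero_of_mem {p : MvPolynomial (Fin n) k} {d : ℕ}
    (hp : p ∈ XI k n ^ (d + 1)) : homogeneousComponent d p = 0 := by
  ext s
  rw [coeff_homogeneousComponent, coeff_zero]
  split_ifs with h
  · exact coeff_eq_zero_of_mem_XI_pow (d + 1) p hp s (by omega)
  · rfl

lemma homogeneousComponent_mul_homogeneous {q f : MvPolynomial (Fin n) k} {d : ℕ}
    (hf : f.IsHomogeneous d) :
    homogeneousComponent d (q * f) = C (constantCoeff q) * f := by
  ext s
  rw [coeff_homogeneousComponent, coeff_C_mul]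
  split_ifs with h
  · rw [coeff_mul]
    rw [Finset.sum_eq_single (0, s)]
    · rw [constantCoeff_eq]
    · rintro ⟨u, v⟩ huv hne
      rw [Finset.HasAntidiagonal.mem_antidiagonal] at huv
      have hu : u ≠ 0 := by
        rintro rfl
        simp only [zero_add] at huv
        exact hne (by rw [huv])
      have hud : 1 ≤ u.degree := by
        rcases Nat.eq_zero_or_pos u.degree with h0 | h1
        · exact absurd ((Finsupp.degree_eq_zero_iff u).mp h0) hu
        · exact h1
      have hv : v.degree ≠ d := by
        have hda := degree_add u v
        rw [huv, h] at hda
        omega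
      simp only [hf.coeff_eq_zero hv, mul_zero]
    · intro hmem
      exact absurd (Finset.HasAntidiagonal.mem_antidiagonal.mpr (zero_add s)) hmem
  · rw [hf.coeff_eq_zero h, mul_zero]

lemma lin_isHomogeneous (c : Fin n → k) :
    (∑ i, C (c i) * X i : MvPolynomial (Fin n) k).IsHomogeneous 1 :=
  IsHomogeneous.sum _ _ _ fun i _ => isHomogeneous_C_mul_X (c i) i

lemma FM_isHomogeneous (M : Matrix (Fin n) (Fin n) k) {f : MvPolynomial (Fin n) k} {d : ℕ}
    (hf : f.IsHomogeneous d) : (FM M f).IsHomogeneous d := by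
  have := hf.aeval (fun j => ∑ i, C (M i j) * X i) (fun j => lin_isHomogeneous fun i => M i j)
  rwa [one_mul] at this

end Stmt9Aux

open Stmt9Aux

set_option maxHeartbeats 1000000
set_option synthInstance.maxHeartbeats 200000

/-- paper's Proposition 5.12: `Aut_k(A) ≅ Sim(f) ⋉ Ker(Φ_A)`. Let `f` be a
nonzero homogeneous polynomial of degree `d` in `k[X_1,…,X_n]` with `2 ≤ d < l`, set
`I = ⟨X_1,…,X_n⟩^l + ⟨f⟩`, `A = k[X_1,…,X_n]/I`, `x_i = X_i + I`, and let `J` be the ideal of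
`A` generated by the `x_i`.  Then every `k`-algebra automorphism `φ` of `A` factors uniquely
as `φ = φ_M ∘ u`, where `M ∈ GL_n(k)` satisfies `F_M f = α • f` for some `α ∈ k^×`, `φ_M` is
induced by `F_M`, and `u` is an automorphism with `u(x_i) - x_i ∈ J²` for all `i`. -/
theorem stmt_9 (k : Type*) [Field k] (n l d : ℕ) (hn : 1 ≤ n)
    (f : MvPolynomial (Fin n) k) (hf0 : f ≠ 0) (hf : f.IsHomogeneous d)
    (hd2 : 2 ≤ d) (hdl : d < l)
    (I : Ideal (MvPolynomial (Fin n) k))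
    (hI : I = (Ideal.span (Set.range (X : Fin n → MvPolynomial (Fin n) k))) ^ l
            + Ideal.span {f})
    (J : Ideal (MvPolynomial (Fin n) k ⧸ I))
    (hJ : J = Ideal.span (Set.range fun i => Ideal.Quotient.mk I (X i))) :
    ∀ φ : (MvPolynomial (Fin n) k ⧸ I) ≃ₐ[k] (MvPolynomial (Fin n) k ⧸ I),
      ∃! Mu : GL (Fin n) k × ((MvPolynomial (Fin n) k ⧸ I) ≃ₐ[k] (MvPolynomial (Fin n) k ⧸ I)),
        (∃ α : kˣ,
            aeval (fun j => ∑ i, C ((Mu.1 : Matrix (Fin n) (Fin n) k) i j) * X i) f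
              = (α : k) • f) ∧
        (∀ i : Fin n,
            Mu.2 (Ideal.Quotient.mk I (X i)) - Ideal.Quotient.mk I (X i) ∈ J ^ 2) ∧
        (∀ g : MvPolynomial (Fin n) k,
            φ (Mu.2.symm (Ideal.Quotient.mk I g)) =
              Ideal.Quotient.mk I
                (aeval (fun j => ∑ i, C ((Mu.1 : Matrix (Fin n) (Fin n) k) i j) * X i) g)) := by
  intro φ
  classical
  set mk := Ideal.Quotient.mk I with hmk
  -- basic containments
  have hXI_span : Ideal.span (Set.range (X : Fin n → MvPolynomial (Fin n) k)) = XI k n := rfl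
  have hXIl_le : XI k n ^ l ≤ I := by rw [hI, hXI_span]; exact le_sup_left
  have hf_le : Ideal.span {f} ≤ I := by rw [hI]; exact le_sup_right
  have hfI : f ∈ I := hf_le (Ideal.mem_span_singleton_self f)
  have hI_le2 : I ≤ XI k n ^ 2 := by
    rw [hI, hXI_span]
    apply sup_le
    · exact Ideal.pow_le_pow_right (by omega)
    · rw [Ideal.span_le, Set.singleton_subset_iff]
      exact isHomogeneous_mem_XI_pow hf (by omega)
  have hI_le1 : I ≤ XI k n := le_trans hI_le2 (by
    have := Ideal.pow_le_pow_right (I := XI k n) (one_le_two)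
    rwa [pow_one] at this)
  -- J as a map
  have hJmap : J = Ideal.map mk (XI k n) := by
    rw [hJ, XI, Ideal.map_span, ← Set.range_comp]
    rfl
  have hJ2map : J ^ 2 = Ideal.map mk (XI k n ^ 2) := by
    rw [Ideal.map_pow, hJmap]
  have mk_surj : Function.Surjective mk := Ideal.Quotient.mk_surjective
  have mem_J2 : ∀ p ∈ XI k n ^ 2, mk p ∈ J ^ 2 := fun p hp =>
    hJ2map ▸ Ideal.mem_map_of_mem _ hp
  have xj_mem_J : ∀ j, mk (X j) ∈ J := fun j =>
    hJmap ▸ Ideal.mem_map_of_mem _ (X_mem_XI j)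
  -- smul and mk
  have mk_lin : ∀ c : Fin n → k, mk (∑ i, C (c i) * X i) = ∑ i, c i • mk (X i) := by
    intro c
    rw [map_sum]
    refine Finset.sum_congr rfl fun i _ => ?_
    rw [← smul_eq_C_mul]
    exact map_smul (Ideal.Quotient.mkₐ k I) _ _
  -- linear independence mod J^2
  have lin_indep : ∀ c : Fin n → k, (∑ i, c i • mk (X i)) ∈ J ^ 2 → ∀ i, c i = 0 := by
    intro c hc i
    rw [← mk_lin, hJ2map, Ideal.mem_map_iff_of_surjective _ mk_surj] at hc
    obtain ⟨p, hp, hpe⟩ := hc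
    have hsub : (∑ j, C (c j) * X j) - p ∈ I := Ideal.Quotient.eq.mp hpe.symm
    have h2 : (∑ j, C (c j) * X j) ∈ XI k n ^ 2 := by
      have := Submodule.add_mem _ (hI_le2 hsub) hp
      simpa using this
    have hco := coeff_eq_zero_of_mem_XI_pow 2 _ h2 (Finsupp.single i 1)
      (by rw [degree_single]; omega)
    have hval : coeff (Finsupp.single i 1) (∑ j, C (c j) * X j) = c i := by
      rw [coeff_sum]
      have h1 : ∀ j : Fin n, coeff (Finsupp.single i 1) (C (c j) * X j)
          = if j = i then c i else 0 := by
        intro j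
        rw [coeff_C_mul, coeff_X']
        by_cases hji : j = i
        · subst hji; simp
        · rw [if_neg fun hcontra => hji ((Finsupp.single_left_inj one_ne_zero).mp hcontra),
            if_neg hji, mul_zero]
      simp only [h1]
      simp
    rw [hval] at hco
    exact hco
  -- nontriviality
  have hItop : I ≠ ⊤ := by
    intro htop
    have : (1 : MvPolynomial (Fin n) k) ∈ XI k n := hI_le1 (htop ▸ Submodule.mem_top)
    have := constantCoeff_eq_zero_of_mem_XI this
    simp at this
  have : Nontrivial (MvPolynomial (Fin n) k ⧸ I) := Ideal.Quotient.nontrivial_iff.mpr hItop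
  -- J is the nilradical
  have hJ_nil : J = nilradical (MvPolynomial (Fin n) k ⧸ I) := by
    apply le_antisymm
    · rw [hJ, Ideal.span_le]
      rintro _ ⟨i, rfl⟩
      refine mem_nilradical.mpr ⟨l, ?_⟩
      rw [← map_pow, Ideal.Quotient.eq_zero_iff_mem]
      exact hXIl_le (Ideal.pow_mem_pow (X_mem_XI i) l)
    · intro a ha
      obtain ⟨p, rfl⟩ := mk_surj a
      obtain ⟨m, hm⟩ := mem_nilradical.mp ha
      have hm0 : m ≠ 0 := by
        rintro rfl
        rw [pow_zero] at hm
        exact one_ne_zero hm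
      have hpm : p ^ m ∈ I := by rwa [← map_pow, Ideal.Quotient.eq_zero_iff_mem] at hm
      have hcc : constantCoeff p = 0 := by
        have h1 : constantCoeff (p ^ m) = 0 := constantCoeff_eq_zero_of_mem_XI (hI_le1 hpm)
        rw [map_pow] at h1
        by_contra hne
        exact pow_ne_zero m hne h1
      rw [hJmap]
      exact Ideal.mem_map_of_mem _ (mem_XI_of_constantCoeff hcc)
  -- automorphisms preserve J and J^2
  have hJequiv : ∀ (ψ : (MvPolynomial (Fin n) k ⧸ I) ≃ₐ[k] (MvPolynomial (Fin n) k ⧸ I))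
      (a : MvPolynomial (Fin n) k ⧸ I), a ∈ J → ψ a ∈ J := by
    intro ψ a ha
    rw [hJ_nil] at ha ⊢
    obtain ⟨m, hm⟩ := mem_nilradical.mp ha
    exact mem_nilradical.mpr ⟨m, by rw [← map_pow, hm, map_zero]⟩
  have hJ2equiv : ∀ (ψ : (MvPolynomial (Fin n) k ⧸ I) ≃ₐ[k] (MvPolynomial (Fin n) k ⧸ I))
      (a : MvPolynomial (Fin n) k ⧸ I), a ∈ J ^ 2 → ψ a ∈ J ^ 2 := by
    intro ψ a ha
    rw [pow_two] at ha ⊢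
    refine Submodule.mul_induction_on ha (fun x hx y hy => ?_) (fun x y hx hy => ?_)
    · rw [map_mul]
      exact Ideal.mul_mem_mul (hJequiv ψ _ hx) (hJequiv ψ _ hy)
    · rw [map_add]
      exact add_mem hx hy
  -- smul stability of J^2
  have hJ2smul : ∀ (c : k) (a : MvPolynomial (Fin n) k ⧸ I), a ∈ J ^ 2 → c • a ∈ J ^ 2 := by
    intro c a ha
    have h : c • a = algebraMap k _ c * a := Algebra.smul_def c a
    rw [h]
    exact Ideal.mul_mem_left _ _ ha
  -- extraction of a matrix representative from an automorphism
  have getRep : ∀ ψ : (MvPolynomial (Fin n) k ⧸ I) ≃ₐ[k] (MvPolynomial (Fin n) k ⧸ I),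
      ∃ (g : Fin n → MvPolynomial (Fin n) k) (M : Matrix (Fin n) (Fin n) k),
        (∀ j, g j ∈ XI k n) ∧ (∀ j, mk (g j) = ψ (mk (X j))) ∧
        (∀ j, g j - ∑ i, C (M i j) * X i ∈ XI k n ^ 2) := by
    intro ψ
    have hch : ∀ j, ∃ p, p ∈ XI k n ∧ mk p = ψ (mk (X j)) := by
      intro j
      have h1 : ψ (mk (X j)) ∈ J := hJequiv ψ _ (xj_mem_J j)
      rw [hJmap, Ideal.mem_map_iff_of_surjective _ mk_surj] at h1
      exact h1
    choose g hg1 hg2 using hch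
    refine ⟨g, fun i j => coeff (Finsupp.single i 1) (g j), hg1, hg2, ?_⟩
    intro j
    apply mem_XI_pow_of_coeff
    intro s hs
    have hcase : s.degree = 0 ∨ s.degree = 1 := by omega
    rw [coeff_sub, coeff_sum]
    rcases hcase with h0 | h1
    · have hs0 : s = 0 := (Finsupp.degree_eq_zero_iff s).mp h0
      subst hs0
      have hgj : coeff 0 (g j) = 0 := by
        rw [← constantCoeff_eq]
        exact constantCoeff_eq_zero_of_mem_XI (hg1 j)
      rw [hgj]
      simp [coeff_C_mul, coeff_X']
    · obtain ⟨i0, rfl⟩ := degree_eq_one_iff h1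
      have hsum : (∑ i, coeff (Finsupp.single i0 1) (C (coeff (Finsupp.single i 1) (g j)) * X i))
          = coeff (Finsupp.single i0 1) (g j) := by
        have h1 : ∀ i : Fin n, coeff (Finsupp.single i0 1) (C (coeff (Finsupp.single i 1) (g j)) * X i)
            = if i = i0 then coeff (Finsupp.single i0 1) (g j) else 0 := by
          intro i
          rw [coeff_C_mul, coeff_X']
          by_cases hii : i = i0
          · subst hii; simp
          · rw [if_neg fun hcontra => hii ((Finsupp.single_left_inj one_ne_zero).mp hcontra),
              if_neg hii, mul_zero]
        simp only [h1]
        simp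
      rw [hsum, sub_self]
  -- rep composition
  have rep_mul : ∀ (ψ χ : (MvPolynomial (Fin n) k ⧸ I) ≃ₐ[k] (MvPolynomial (Fin n) k ⧸ I))
      (M N : Matrix (Fin n) (Fin n) k),
      (∀ j, ψ (mk (X j)) - ∑ i, M i j • mk (X i) ∈ J ^ 2) →
      (∀ j, χ (mk (X j)) - ∑ i, N i j • mk (X i) ∈ J ^ 2) →
      (∀ j, ψ (χ (mk (X j))) - ∑ i, (M * N) i j • mk (X i) ∈ J ^ 2) := by
    intro ψ χ M N hM hN j
    have key : ∑ i, N i j • (∑ m, M m i • mk (X m)) = ∑ i, (M * N) i j • mk (X i) := by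
      simp_rw [Finset.smul_sum, smul_smul]
      rw [Finset.sum_comm]
      refine Finset.sum_congr rfl fun m _ => ?_
      rw [Matrix.mul_apply, Finset.sum_smul]
      refine Finset.sum_congr rfl fun i _ => ?_
      rw [mul_comm]
    have h1 : ψ (χ (mk (X j))) - ∑ i, N i j • ψ (mk (X i)) ∈ J ^ 2 := by
      have h0 := hJ2equiv ψ _ (hN j)
      rw [map_sub, map_sum] at h0
      simp_rw [map_smul] at h0
      exact h0
    have h2 : (∑ i, N i j • ψ (mk (X i))) - ∑ i, N i j • (∑ m, M m i • mk (X m)) ∈ J ^ 2 := by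
      rw [← Finset.sum_sub_distrib]
      simp_rw [← smul_sub]
      exact Ideal.sum_mem _ fun i _ => hJ2smul _ _ (hM i)
    have h3 := add_mem h1 h2
    rw [sub_add_sub_cancel, key] at h3
    exact h3
  -- representatives for φ and φ.symm
  obtain ⟨g, M, hg_mem, hg_mk, hg_lin⟩ := getRep φ
  obtain ⟨g', N, hg'_mem, hg'_mk, hg'_lin⟩ := getRep φ.symm
  have bridge : ∀ (B : Matrix (Fin n) (Fin n) k) (j : Fin n),
      mk (∑ i, C (B i j) * X i) = ∑ i, B i j • mk (X i) := fun B j => mk_lin fun i => B i j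
  have RepM : ∀ j, φ (mk (X j)) - ∑ i, M i j • mk (X i) ∈ J ^ 2 := by
    intro j
    rw [← hg_mk j, ← bridge, ← map_sub]
    exact mem_J2 _ (hg_lin j)
  have RepN : ∀ j, φ.symm (mk (X j)) - ∑ i, N i j • mk (X i) ∈ J ^ 2 := by
    intro j
    rw [← hg'_mk j, ← bridge, ← map_sub]
    exact mem_J2 _ (hg'_lin j)
  -- uniqueness of representing matrices
  have rep_unique : ∀ (y : Fin n → MvPolynomial (Fin n) k ⧸ I)
      (B B' : Matrix (Fin n) (Fin n) k),
      (∀ j, y j - ∑ i, B i j • mk (X i) ∈ J ^ 2) →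
      (∀ j, y j - ∑ i, B' i j • mk (X i) ∈ J ^ 2) → B = B' := by
    intro y B B' hB hB'
    ext i j
    have hmem := sub_mem (hB' j) (hB j)
    have heq : (y j - ∑ i, B' i j • mk (X i)) - (y j - ∑ i, B i j • mk (X i))
        = ∑ i, (B i j - B' i j) • mk (X i) := by
      simp_rw [sub_smul]
      rw [Finset.sum_sub_distrib]
      ring
    rw [heq] at hmem
    exact sub_eq_zero.mp (lin_indep (fun i => B i j - B' i j) hmem i)
  have sum_one : ∀ j, ∑ i, (1 : Matrix (Fin n) (Fin n) k) i j • mk (X i) = mk (X j) := by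
    intro j
    have h1 : ∀ i : Fin n, (1 : Matrix (Fin n) (Fin n) k) i j • mk (X i)
        = if i = j then mk (X j) else 0 := by
      intro i
      rw [Matrix.one_apply]
      by_cases hij : i = j
      · subst hij; simp
      · simp [hij]
    simp only [h1]
    simp
  have hMN : M * N = 1 := by
    have hcomp := rep_mul φ φ.symm M N RepM RepN
    refine rep_unique (fun j => mk (X j)) (M * N) 1 (fun j => ?_) (fun j => ?_)
    · have := hcomp j
      rwa [AlgEquiv.apply_symm_apply] at this
    · rw [sum_one, sub_self]
      exact zero_mem _
  have hNM : N * M = 1 := by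
    have hcomp := rep_mul φ.symm φ N M RepN RepM
    refine rep_unique (fun j => mk (X j)) (N * M) 1 (fun j => ?_) (fun j => ?_)
    · have := hcomp j
      rwa [AlgEquiv.symm_apply_apply] at this
    · rw [sum_one, sub_self]
      exact zero_mem _
  -- the key step: FM M f is a scalar multiple of f
  have hGfI : aeval g f ∈ I := by
    have h1 : (Ideal.Quotient.mkₐ k I).comp (aeval g) = aeval fun j => mk (g j) := by
      rw [comp_aeval]
      simp [Ideal.Quotient.mkₐ_eq_mk, hmk]
    have h2 : φ.toAlgHom.comp (Ideal.Quotient.mkₐ k I) = aeval fun j => φ (mk (X j)) := by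
      apply MvPolynomial.algHom_ext
      intro j
      simp [Ideal.Quotient.mkₐ_eq_mk, hmk]
    have h3 : mk (aeval g f) = φ (mk f) := by
      calc mk (aeval g f) = ((Ideal.Quotient.mkₐ k I).comp (aeval g)) f := rfl
        _ = aeval (fun j => mk (g j)) f := by rw [h1]
        _ = aeval (fun j => φ (mk (X j))) f := by
              rw [show (fun j => mk (g j)) = fun j => φ (mk (X j)) from funext hg_mk]
        _ = (φ.toAlgHom.comp (Ideal.Quotient.mkₐ k I)) f := by rw [h2]
        _ = φ (mk f) := rfl
    rw [← Ideal.Quotient.eq_zero_iff_mem, h3,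
      show mk f = 0 from Ideal.Quotient.eq_zero_iff_mem.mpr hfI, map_zero]
  have hdiff : aeval g f - FM M f ∈ XI k n ^ (d + 1) :=
    aeval_sub_mem hf g (fun j => ∑ i, C (M i j) * X i) hg_mem
      (fun j => Ideal.sum_mem _ fun i _ => Ideal.mul_mem_left _ _ (X_mem_XI i)) hg_lin
  have hmem_sup : FM M f ∈ Ideal.span {f} ⊔ XI k n ^ (d + 1) := by
    have hIle : I ≤ Ideal.span {f} ⊔ XI k n ^ (d + 1) := by
      rw [hI, hXI_span]
      apply sup_le
      · exact le_trans (Ideal.pow_le_pow_right (by omega)) le_sup_right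
      · exact le_sup_left
    have h1 : aeval g f ∈ Ideal.span {f} ⊔ XI k n ^ (d + 1) := hIle hGfI
    have h2 : FM M f = aeval g f - (aeval g f - FM M f) := by ring
    rw [h2]
    exact sub_mem h1 ((le_sup_right : XI k n ^ (d+1) ≤ _) hdiff)
  obtain ⟨y, hy, z, hz, hyz⟩ := Submodule.mem_sup.mp hmem_sup
  obtain ⟨q, hq⟩ := Ideal.mem_span_singleton'.mp hy
  have hFMf : FM M f = C (constantCoeff q) * f := by
    have h1 := homogeneousComponent_of_isHomogeneous (FM_isHomogeneous M hf)
    rw [← h1, ← hyz, map_add, homogeneousComponent_eq_zero_of_mem hz, add_zero, ← hq,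
      homogeneousComponent_mul_homogeneous hf]
  set α : k := constantCoeff q with hα_def
  have hNMf : FM N (FM M f) = f := by
    rw [← AlgHom.comp_apply, FM_comp, hNM, FM_one, AlgHom.id_apply]
  have hα : α ≠ 0 := by
    intro h0
    have hzero : FM M f = 0 := by rw [hFMf, h0, map_zero, zero_mul]
    rw [hzero, map_zero] at hNMf
    exact hf0 hNMf.symm
  have hMf_span : FM M f ∈ Ideal.span {f} := by
    rw [hFMf]
    exact Ideal.mul_mem_left _ _ (Ideal.mem_span_singleton_self f)
  have hNf : FM N f = C α⁻¹ * f := by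
    have h2 := hNMf
    rw [hFMf, _root_.map_mul] at h2
    have hC : FM N (C α) = C α := by simp [FM, algebraMap_eq]
    rw [hC] at h2
    calc FM N f = C α⁻¹ * (C α * FM N f) := by
          rw [← mul_assoc, ← C_mul, inv_mul_cancel₀ hα, C_1, one_mul]
      _ = C α⁻¹ * f := by rw [h2]
  have hNf_span : FM N f ∈ Ideal.span {f} := by
    rw [hNf]
    exact Ideal.mul_mem_left _ _ (Ideal.mem_span_singleton_self f)
  -- descent to the quotient
  have descend : ∀ B : Matrix (Fin n) (Fin n) k, FM B f ∈ Ideal.span {f} →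
      ∀ p ∈ I, FM B p ∈ I := by
    intro B hBf p hp
    have hmap : Ideal.map (FM B) I ≤ I := by
      conv_lhs => rw [hI, hXI_span, Submodule.add_eq_sup]
      rw [Ideal.map_sup]
      apply sup_le
      · rw [Ideal.map_pow]
        refine le_trans (Ideal.pow_right_mono ?_ l) hXIl_le
        rw [XI, Ideal.map_span, Ideal.span_le]
        rintro _ ⟨_, ⟨j, rfl⟩, rfl⟩
        exact FM_X_mem B j
      · rw [Ideal.map_span, Set.image_singleton, Ideal.span_le, Set.singleton_subset_iff]
        exact hf_le hBf
    exact hmap (Ideal.mem_map_of_mem _ hp)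
  have liftcond : ∀ B : Matrix (Fin n) (Fin n) k, FM B f ∈ Ideal.span {f} →
      ∀ a ∈ I, ((Ideal.Quotient.mkₐ k I).comp (FM B)) a = 0 := by
    intro B hBf a ha
    rw [AlgHom.comp_apply, Ideal.Quotient.mkₐ_eq_mk]
    exact Ideal.Quotient.eq_zero_iff_mem.mpr (descend B hBf a ha)
  set ΦM := Ideal.Quotient.liftₐ I ((Ideal.Quotient.mkₐ k I).comp (FM M))
    (liftcond M hMf_span) with hΦM
  set ΦN := Ideal.Quotient.liftₐ I ((Ideal.Quotient.mkₐ k I).comp (FM N))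
    (liftcond N hNf_span) with hΦN
  have ΦM_mk : ∀ p, ΦM (mk p) = mk (FM M p) := by
    intro p
    rw [hΦM, Ideal.Quotient.liftₐ_apply]
    exact Ideal.Quotient.lift_mk I _ _
  have ΦN_mk : ∀ p, ΦN (mk p) = mk (FM N p) := by
    intro p
    rw [hΦN, Ideal.Quotient.liftₐ_apply]
    exact Ideal.Quotient.lift_mk I _ _
  have hcomp1 : ΦM.comp ΦN = AlgHom.id k _ := by
    apply AlgHom.ext
    intro a
    obtain ⟨p, rfl⟩ := mk_surj a
    rw [AlgHom.comp_apply, ΦN_mk, ΦM_mk, AlgHom.id_apply, ← AlgHom.comp_apply, FM_comp, hMN,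
      FM_one, AlgHom.id_apply]
  have hcomp2 : ΦN.comp ΦM = AlgHom.id k _ := by
    apply AlgHom.ext
    intro a
    obtain ⟨p, rfl⟩ := mk_surj a
    rw [AlgHom.comp_apply, ΦM_mk, ΦN_mk, AlgHom.id_apply, ← AlgHom.comp_apply, FM_comp, hNM,
      FM_one, AlgHom.id_apply]
  set eqM := AlgEquiv.ofAlgHom ΦM ΦN hcomp1 hcomp2 with heqM
  have eqM_mk : ∀ p, eqM (mk p) = mk (FM M p) := ΦM_mk
  have eqM_symm_mk : ∀ p, eqM.symm (mk p) = mk (FM N p) := by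
    intro p
    apply eqM.injective
    rw [AlgEquiv.apply_symm_apply, eqM_mk, ← AlgHom.comp_apply, FM_comp, hMN, FM_one,
      AlgHom.id_apply]
  set u := φ.trans eqM.symm with hu
  have u_apply : ∀ a, u a = eqM.symm (φ a) := fun a => rfl
  have u_symm_apply : ∀ a, u.symm a = φ.symm (eqM a) := fun a => rfl
  -- the GL element
  set GLM : GL (Fin n) k := ⟨M, N, hMN, hNM⟩ with hGLM
  refine ⟨⟨GLM, u⟩, ⟨?_, ?_, ?_⟩, ?_⟩
  · -- condition (i)
    refine ⟨Units.mk0 α hα, ?_⟩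
    have : aeval (fun j => ∑ i, C (M i j) * X i) f = FM M f := rfl
    rw [this, hFMf, smul_eq_C_mul]
    rfl
  · -- condition (ii)
    intro i
    have h1 : φ (mk (X i)) - mk (FM M (X i)) ∈ J ^ 2 := by
      have := RepM i
      rwa [← bridge M i, ← FM_X M i] at this
    have h2 := hJ2equiv eqM.symm _ h1
    rw [map_sub, eqM_symm_mk] at h2
    have h3 : FM N (FM M (X i)) = X i := by
      rw [← AlgHom.comp_apply, FM_comp, hNM, FM_one, AlgHom.id_apply]
    rw [h3] at h2
    exact h2
  · -- condition (iii)
    intro p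
    have h1 : u.symm (mk p) = φ.symm (eqM (mk p)) := rfl
    rw [h1, AlgEquiv.apply_symm_apply, eqM_mk]
    rfl
  · -- uniqueness
    rintro ⟨M', u'⟩ ⟨⟨α', hα'⟩, hu2, hu3⟩
    have hu'symmJ2 : ∀ j, u'.symm (mk (X j)) - mk (X j) ∈ J ^ 2 := by
      intro j
      have hb := hu2 j
      have hc := hJ2equiv u'.symm _ hb
      rw [map_sub, AlgEquiv.symm_apply_apply] at hc
      have := neg_mem hc
      rwa [neg_sub] at this
    have RepM' : ∀ j, φ (mk (X j)) - ∑ i, (M' : Matrix (Fin n) (Fin n) k) i j • mk (X i)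
        ∈ J ^ 2 := by
      intro j
      have h1 : φ (u'.symm (mk (X j)))
          = mk (aeval (fun j => ∑ i, C ((M' : Matrix (Fin n) (Fin n) k) i j) * X i) (X j)) :=
        hu3 (X j)
      rw [aeval_X] at h1
      have h2 : φ (mk (X j)) - φ (u'.symm (mk (X j)))
          = φ (mk (X j) - u'.symm (mk (X j))) := (map_sub φ _ _).symm
      have h3 : mk (X j) - u'.symm (mk (X j)) ∈ J ^ 2 := by
        have := neg_mem (hu'symmJ2 j)
        rwa [neg_sub] at this
      have h4 := hJ2equiv φ _ h3
      rw [← h2] at h4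
      have h5 : φ (mk (X j)) - ∑ i, (M' : Matrix (Fin n) (Fin n) k) i j • mk (X i)
          = (φ (mk (X j)) - φ (u'.symm (mk (X j))))
            + (φ (u'.symm (mk (X j))) - ∑ i, (M' : Matrix (Fin n) (Fin n) k) i j • mk (X i)) := by
        ring
      have h7 : φ (u'.symm (mk (X j))) - ∑ i, (M' : Matrix (Fin n) (Fin n) k) i j • mk (X i)
          = 0 := by
        rw [h1, bridge, sub_self]
      rw [h5, h7]
      rw [add_zero]
      exact h4
    have hMM' : (M' : Matrix (Fin n) (Fin n) k) = M :=
      rep_unique (fun j => φ (mk (X j))) (M' : Matrix (Fin n) (Fin n) k) M RepM' RepM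
    have hGL : M' = GLM := by
      apply Units.ext
      rw [hGLM]
      exact hMM'
    have hueq : u' = u := by
      have hsymm : u'.symm = u.symm := by
        apply AlgEquiv.ext
        intro a
        obtain ⟨p, rfl⟩ := mk_surj a
        apply φ.injective
        have h1 := hu3 p
        rw [hMM'] at h1
        rw [h1]
        have h2 : u.symm (mk p) = φ.symm (eqM (mk p)) := rfl
        rw [h2, AlgEquiv.apply_symm_apply, eqM_mk]
        rfl
      rw [← AlgEquiv.symm_symm u', hsymm, AlgEquiv.symm_symm]
    exact Prod.ext hGL hueq
end

section
/- Let k be an infinite field, n ≥ 1, l ≥ 2, 1 ≤ r ≤ n, and let I be an ideal of k[X_1,…,X_n] with ⟨X_1,…,X_n⟩^l ⊆ I ⊆ ⟨X_1,…,X_n⟩². Then the following are equivalent: (1) for all a_1,…,a_{r−1}, β ∈ k^×, the k-algebra endomorphism D of k[X_1,…,X_n] with D(X_i) = a_i X_i for 1 ≤ i ≤ r−1 and D(X_i) = β X_i for r ≤ i ≤ n satisfies D(I) ⊆ I; (2) there exist finitely many (possibly none) polynomials P_1,…,P_m such that I = ⟨X_1,…,X_n⟩^l + ⟨P_1,…,P_m⟩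 and each P_j is either a monomial or an s_j-monomial homogeneous polynomial for some s_j ≥ r. -/
open MvPolynomial Finset

variable {k : Type*} [Field k] {n : ℕ}

/-- A *monomial*: a polynomial of the form `c·X_1^{e_1}⋯X_n^{e_n}` with `c ∈ k` nonzero. -/
def IsMonomialPoly (p : MvPolynomial (Fin n) k) : Prop :=
  ∃ (c : k) (e : Fin n →₀ ℕ), c ≠ 0 ∧ p = monomial e c

/-- An *`s`-homogeneous polynomial* (`s ≥ 1`): a non-constant homogeneous polynomial, not a
monomial, lying in the subring generated by `X_s, …, X_n` (in the paper's 1-based indexing the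
Lean variable `X i` is the paper's `X_{i+1}`). -/
def IsSHomogeneousPoly (s : ℕ) (g : MvPolynomial (Fin n) k) : Prop :=
  g ≠ 0 ∧ (∃ d, 0 < d ∧ g.IsHomogeneous d) ∧ ¬ IsMonomialPoly g ∧
    ∀ i ∈ g.vars, s ≤ (i : ℕ) + 1

/-- An *`s`-monomial homogeneous polynomial*: a product `P = M·g` where `M` is a monomial or a
nonzero scalar and `g` is `s`-homogeneous. -/
def IsSMonomialHomogeneousPoly (s : ℕ) (p : MvPolynomial (Fin n) k) : Prop :=
  ∃ M g, IsMonomialPoly M ∧ IsSHomogeneousPoly s g ∧ p = M * g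


lemma scl_monomial (a : Fin n → k) (u : Fin n →₀ ℕ) (c : k) :
    aeval (fun i => a i • X i) (monomial u c) =
      (∏ i ∈ u.support, a i ^ u i) • (monomial u c : MvPolynomial (Fin n) k) := by
  rw [aeval_monomial, monomial_eq, smul_eq_C_mul, Finsupp.prod, Finsupp.prod]
  have : ∏ i ∈ u.support, ((fun i => a i • X i) i) ^ u i
      = C (∏ i ∈ u.support, a i ^ u i) * ∏ i ∈ u.support, (X i : MvPolynomial (Fin n) k) ^ u i := by
    rw [map_prod, ← Finset.prod_mul_distrib]
    refine Finset.prod_congr rfl fun i _ => ?_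
    rw [smul_pow, smul_eq_C_mul, map_pow]
  rw [this]
  simp [algebraMap_eq]
  ring

lemma aux_infinite_units [Infinite k] : Infinite kˣ := by
  have h : ({(0:k)}ᶜ : Set k).Infinite := (Set.finite_singleton 0).infinite_compl
  have : Infinite ({(0:k)}ᶜ : Set k) := h.to_subtype
  exact Infinite.of_injective
    (fun x : ({(0:k)}ᶜ : Set k) => Units.mk0 x.1 (x.2 : _))
    (fun x y hxy => Subtype.ext (by exact congrArg Units.val hxy))

lemma vandermonde_mem [Infinite k] (I : Ideal (MvPolynomial (Fin n) k)) (N : ℕ)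
    (v : ℕ → MvPolynomial (Fin n) k)
    (h : ∀ c : kˣ, ∑ j ∈ Finset.range (N+1), ((c : k))^j • v j ∈ I) :
    ∀ j ≤ N, v j ∈ I := by
  have : Infinite kˣ := aux_infinite_units
  let t : Fin (N+1) ↪ kˣ := Fin.valEmbedding.trans (Infinite.natEmbedding kˣ)
  set A : Matrix (Fin (N+1)) (Fin (N+1)) k :=
    Matrix.vandermonde (fun i => ((t i : kˣ) : k)) with hA
  have hdet : IsUnit A.det := by
    rw [hA, Matrix.det_vandermonde]
    refine (Finset.prod_ne_zero_iff.mpr fun i _ => Finset.prod_ne_zero_iff.mpr fun j hj => ?_).isUnit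
    have hij : i ≠ j := fun hij => by rw [hij] at hj; exact absurd hj (by simp)
    have : t i ≠ t j := fun hh => hij (t.injective hh)
    exact sub_ne_zero_of_ne (fun hh => this (Units.ext hh).symm)
  have hinv : A⁻¹ * A = 1 := Matrix.nonsing_inv_mul A hdet
  have hw : ∀ i : Fin (N+1), ∑ j2 : Fin (N+1), A i j2 • v (j2 : ℕ) ∈ I := by
    intro i
    have := h (t i)
    rw [← Fin.sum_univ_eq_sum_range (fun j => ((t i : k))^j • v j) (N+1)] at this
    have heq : ∑ j2 : Fin (N+1), A i j2 • v (j2 : ℕ)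
        = ∑ j2 : Fin (N+1), ((t i : k))^(j2:ℕ) • v (j2:ℕ) :=
      Finset.sum_congr rfl fun j2 _ => by rw [hA, Matrix.vandermonde_apply]
    rw [heq]; exact this
  intro j hj
  set j' : Fin (N+1) := ⟨j, by omega⟩ with hj'
  have key : v j = ∑ i : Fin (N+1), (A⁻¹ j' i) • (∑ j2 : Fin (N+1), A i j2 • v (j2:ℕ)) := by
    have : ∑ i : Fin (N+1), (A⁻¹ j' i) • (∑ j2 : Fin (N+1), A i j2 • v (j2:ℕ))
        = ∑ j2 : Fin (N+1), ((A⁻¹ * A) j' j2) • v (j2:ℕ) := by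
      simp_rw [Finset.smul_sum, smul_smul]
      rw [Finset.sum_comm]
      refine Finset.sum_congr rfl fun j2 _ => ?_
      rw [Matrix.mul_apply, Finset.sum_smul]
    rw [this, hinv]
    simp only [Matrix.one_apply]
    rw [Finset.sum_congr rfl (fun j2 _ => by rw [ite_smul, one_smul, zero_smul]),
      Finset.sum_ite_eq]
    simp [hj']
  rw [key]
  exact Ideal.sum_mem _ fun i _ => by
    rw [smul_eq_C_mul]; exact I.mul_mem_left _ (hw i)

lemma sum_digits_lt (B : ℕ) : ∀ (m : ℕ) (d : ℕ → ℕ), (∀ j < m, d j < B) →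
    ∑ j ∈ Finset.range m, d j * B ^ j < B ^ m := by
  intro m
  induction m with
  | zero => intro d _; simp
  | succ m ih =>
    intro d hd
    rw [Finset.sum_range_succ]
    have h1 := ih d (fun j hj => hd j (by omega))
    have h2 : d m < B := hd m (by omega)
    have h3 : (d m + 1) * B ^ m ≤ B * B ^ m := Nat.mul_le_mul_right _ (by omega)
    rw [pow_succ]
    nlinarith [h1, h3]

lemma digits_unique (B : ℕ) : ∀ (m : ℕ) (d d' : ℕ → ℕ), (∀ j < m, d j < B) → (∀ j < m, d' j < B) →
    (∑ j ∈ Finset.range m, d j * B ^ j = ∑ j ∈ Finset.range m, d' j * B ^ j) →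
    ∀ j < m, d j = d' j := by
  intro m
  induction m with
  | zero => intro d d' _ _ _ j hj; omega
  | succ m ih =>
    intro d d' hd hd' h j hj
    rw [Finset.sum_range_succ, Finset.sum_range_succ] at h
    have b1 := sum_digits_lt B m d (fun j hj => hd j (by omega))
    have b2 := sum_digits_lt B m d' (fun j hj => hd' j (by omega))
    set s1 := ∑ x ∈ Finset.range m, d x * B ^ x with hs1
    set s2 := ∑ x ∈ Finset.range m, d' x * B ^ x with hs2
    have htop : d m = d' m := by
      rcases Nat.lt_trichotomy (d m) (d' m) with hlt | heq | hgt
      · have hx : d m * B ^ m + B ^ m ≤ d' m * B ^ m := by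
          have := Nat.mul_le_mul_right (B ^ m) (show d m + 1 ≤ d' m by omega)
          rw [add_mul, one_mul] at this; exact this
        omega
      · exact heq
      · have hx : d' m * B ^ m + B ^ m ≤ d m * B ^ m := by
          have := Nat.mul_le_mul_right (B ^ m) (show d' m + 1 ≤ d m by omega)
          rw [add_mul, one_mul] at this; exact this
        omega
    rcases Nat.lt_or_ge j m with hjm | hjm
    · exact ih d d' (fun j hj => hd j (by omega)) (fun j hj => hd' j (by omega))
        (by rw [htop] at h; omega) j hjm
    · have : j = m := by omega
      rw [this]; exact htop

/-- extension of a finsupp exponent to ℕ -/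
def Uf (u : Fin n →₀ ℕ) : ℕ → ℕ := fun j => if h : j < n then u ⟨j, h⟩ else 0

lemma Uf_coe (u : Fin n →₀ ℕ) (i : Fin n) : Uf u (i : ℕ) = u i := by
  simp [Uf, i.isLt]

def blocksum (m0 : ℕ) (u : Fin n →₀ ℕ) : ℕ := ∑ j ∈ Finset.Ico m0 n, Uf u j

def Wt (m0 B : ℕ) : ℕ → ℕ := fun j => if j < m0 then B ^ j else B ^ m0

def degw (m0 B : ℕ) (u : Fin n →₀ ℕ) : ℕ := ∑ j ∈ Finset.range n, Uf u j * Wt m0 B j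

lemma sum_univ_eq (u : Fin n →₀ ℕ) : ∑ j ∈ Finset.range n, Uf u j = u.sum fun _ e => e := by
  rw [Finsupp.sum_fintype _ _ (fun _ => rfl), ← Fin.sum_univ_eq_sum_range]
  exact Finset.sum_congr rfl fun i _ => Uf_coe u i

lemma Uf_le (u : Fin n →₀ ℕ) (j : ℕ) : Uf u j ≤ u.sum fun _ e => e := by
  rw [← sum_univ_eq]
  by_cases h : j < n
  · exact Finset.single_le_sum (fun _ _ => Nat.zero_le _) (Finset.mem_range.mpr h)
  · simp [Uf, h]

lemma blocksum_le (m0 : ℕ) (u : Fin n →₀ ℕ) : blocksum m0 u ≤ u.sum fun _ e => e := by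
  rw [← sum_univ_eq, blocksum]
  exact Finset.sum_le_sum_of_subset (by rw [Finset.range_eq_Ico]; exact Finset.Ico_subset_Ico (Nat.zero_le _) le_rfl)

lemma degw_digits (m0 B : ℕ) (hm0 : m0 ≤ n) (u : Fin n →₀ ℕ) :
    degw m0 B u = ∑ j ∈ Finset.range m0, Uf u j * B ^ j + blocksum m0 u * B ^ m0 := by
  rw [degw, Finset.range_eq_Ico, ← Finset.sum_Ico_consecutive _ (Nat.zero_le m0) hm0,
    ← Finset.range_eq_Ico]
  congr 1
  · exact Finset.sum_congr rfl fun j hj => by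
      rw [Wt, if_pos (Finset.mem_range.mp hj)]
  · rw [blocksum, Finset.sum_mul]
    exact Finset.sum_congr rfl fun j hj => by
      rw [Wt, if_neg (by have := (Finset.mem_Ico.mp hj).1; omega)]

lemma degw_le (m0 B T : ℕ) (hB : T + 1 ≤ B) (u : Fin n →₀ ℕ) (hu : (u.sum fun _ e => e) ≤ T) :
    degw m0 B u ≤ T * B ^ m0 := by
  have h1 : ∀ j, Wt m0 B j ≤ B ^ m0 := by
    intro j; rw [Wt]
    split
    · exact Nat.pow_le_pow_right (by omega) (by omega)
    · exact le_rfl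
  calc degw m0 B u ≤ ∑ j ∈ Finset.range n, Uf u j * B ^ m0 :=
        Finset.sum_le_sum fun j _ => Nat.mul_le_mul_left _ (h1 j)
    _ = (∑ j ∈ Finset.range n, Uf u j) * B ^ m0 := (Finset.sum_mul _ _ _).symm
    _ ≤ T * B ^ m0 := Nat.mul_le_mul_right _ (by rw [sum_univ_eq]; exact hu)

/-- key digit separation -/
lemma degw_inj (m0 B T : ℕ) (hm0 : m0 ≤ n) (hB : B = T + 1) (u u' : Fin n →₀ ℕ)
    (hu : (u.sum fun _ e => e) ≤ T) (hu' : (u'.sum fun _ e => e) ≤ T)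
    (h : degw m0 B u = degw m0 B u') :
    (∀ j < m0, Uf u j = Uf u' j) ∧ blocksum m0 u = blocksum m0 u' := by
  rw [degw_digits m0 B hm0, degw_digits m0 B hm0] at h
  set d : ℕ → ℕ := fun j => if j < m0 then Uf u j else blocksum m0 u with hd
  set d' : ℕ → ℕ := fun j => if j < m0 then Uf u' j else blocksum m0 u' with hd'
  have hsum : ∀ (w : Fin n →₀ ℕ), ∑ j ∈ Finset.range (m0+1),
      (fun j => if j < m0 then Uf w j else blocksum m0 w) j * B ^ j
      = ∑ j ∈ Finset.range m0, Uf w j * B ^ j + blocksum m0 w * B ^ m0 := by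
    intro w
    rw [Finset.sum_range_succ]
    beta_reduce
    rw [if_neg (lt_irrefl m0)]
    congr 1
    exact Finset.sum_congr rfl fun j hj => by rw [if_pos (Finset.mem_range.mp hj)]
  have hbd : ∀ (w : Fin n →₀ ℕ), (w.sum fun _ e => e) ≤ T →
      ∀ j < m0 + 1, (fun j => if j < m0 then Uf w j else blocksum m0 w) j < B := by
    intro w hw j _
    dsimp only
    split
    · exact lt_of_le_of_lt (le_trans (Uf_le w j) hw) (by omega)
    · exact lt_of_le_of_lt (le_trans (blocksum_le m0 w) hw) (by omega)
  have := digits_unique B (m0+1) d d' (hbd u hu) (hbd u' hu')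
    (by rw [hd, hd', hsum u, hsum u', h])
  constructor
  · intro j hj
    have := this j (by omega)
    rw [hd, hd'] at this
    simpa [if_pos hj] using this
  · have := this m0 (by omega)
    rw [hd, hd'] at this
    simpa [lt_irrefl] using this

noncomputable def compc (m0 B : ℕ) (f : MvPolynomial (Fin n) k) (d : ℕ) : MvPolynomial (Fin n) k :=
  ∑ u ∈ f.support.filter (fun u => degw m0 B u = d), monomial u (coeff u f)

lemma compc_coeff (m0 B : ℕ) (f : MvPolynomial (Fin n) k) (d : ℕ) (w : Fin n →₀ ℕ) :
    coeff w (compc m0 B f d) =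
      if w ∈ f.support.filter (fun u => degw m0 B u = d) then coeff w f else 0 := by
  rw [compc, coeff_sum]
  rw [Finset.sum_congr rfl (fun u _ => coeff_monomial w u (coeff u f))]
  exact Finset.sum_ite_eq' _ w (fun u => coeff u f)

lemma compc_support (m0 B : ℕ) (f : MvPolynomial (Fin n) k) (d : ℕ) :
    (compc m0 B f d).support = f.support.filter (fun u => degw m0 B u = d) := by
  ext w
  rw [mem_support_iff, compc_coeff]
  constructor
  · intro h
    by_contra hw
    rw [if_neg hw] at h; exact h rfl
  · intro hw
    rw [if_pos hw]
    exact mem_support_iff.mp (Finset.mem_filter.mp hw).1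

lemma sum_compc (m0 B N : ℕ) (f : MvPolynomial (Fin n) k)
    (hN : ∀ u ∈ f.support, degw m0 B u ≤ N) :
    ∑ d ∈ Finset.range (N+1), compc m0 B f d = f := by
  unfold compc
  rw [Finset.sum_fiberwise_of_maps_to
    (fun u hu => Finset.mem_range.mpr (Nat.lt_succ_of_le (hN u hu)))]
  exact support_sum_monomial_coeff f

lemma degw_support (m0 B : ℕ) (u : Fin n →₀ ℕ) :
    degw m0 B u = ∑ i ∈ u.support, Wt m0 B (i : ℕ) * u i := by
  rw [degw, ← Fin.sum_univ_eq_sum_range (fun j => Uf u j * Wt m0 B j) n]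
  rw [Finset.sum_congr rfl (fun i (_ : i ∈ Finset.univ) => by rw [Uf_coe u i, Nat.mul_comm])]
  exact (Finset.sum_subset (Finset.subset_univ u.support)
    (fun i _ hi => by rw [Finsupp.notMem_support_iff.mp hi, Nat.mul_zero])).symm

lemma scl_eq_sum_compc (m0 B N : ℕ) (f : MvPolynomial (Fin n) k)
    (hN : ∀ u ∈ f.support, degw m0 B u ≤ N) (c : k) :
    aeval (fun i : Fin n => c ^ Wt m0 B (i : ℕ) • X i) f
      = ∑ d ∈ Finset.range (N+1), c ^ d • compc m0 B f d := by
  conv_lhs => rw [← support_sum_monomial_coeff f]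
  rw [map_sum]
  have hterm : ∀ u ∈ f.support,
      aeval (fun i : Fin n => c ^ Wt m0 B (i : ℕ) • X i) (monomial u (coeff u f))
        = c ^ degw m0 B u • monomial u (coeff u f) := by
    intro u _
    rw [scl_monomial]
    congr 1
    rw [Finset.prod_congr rfl (fun (i : Fin n) _ => (pow_mul c (Wt m0 B (i:ℕ)) (u i)).symm),
      Finset.prod_pow_eq_pow_sum, degw_support]
  rw [Finset.sum_congr rfl hterm]
  unfold compc
  rw [← Finset.sum_fiberwise_of_maps_to
    (fun u hu => Finset.mem_range.mpr (Nat.lt_succ_of_le (hN u hu)))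
    (fun u => c ^ degw m0 B u • monomial u (coeff u f))]
  refine Finset.sum_congr rfl fun d _ => ?_
  rw [Finset.smul_sum]
  exact Finset.sum_congr rfl fun u hu => by
    rw [(Finset.mem_filter.mp hu).2]

lemma compc_mem [Infinite k] (r : ℕ) (hr1 : 1 ≤ r) (hrn : r ≤ n)
    (I : Ideal (MvPolynomial (Fin n) k))
    (H : ∀ a : Fin n → kˣ,
        (∀ i j : Fin n, r - 1 ≤ (i : ℕ) → r - 1 ≤ (j : ℕ) → a i = a j) →
        ∀ g ∈ I, aeval (fun i => (a i : k) • X i) g ∈ I)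
    (f : MvPolynomial (Fin n) k) (hf : f ∈ I) (d : ℕ) :
    compc (r-1) (f.totalDegree + 1) f d ∈ I := by
  set m0 := r - 1 with hm0
  set T := f.totalDegree with hT
  set B := T + 1 with hB
  set N := T * B ^ m0 with hN
  have hdeg : ∀ u ∈ f.support, degw m0 B u ≤ N := fun u hu =>
    degw_le m0 B T le_rfl u (le_totalDegree hu)
  by_cases hd : d ≤ N
  · refine vandermonde_mem I N (compc m0 B f) ?_ d hd
    intro c
    have ha : ∀ i j : Fin n, r - 1 ≤ (i : ℕ) → r - 1 ≤ (j : ℕ) →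
        (fun i : Fin n => c ^ Wt m0 B (i:ℕ)) i = (fun i : Fin n => c ^ Wt m0 B (i:ℕ)) j := by
      intro i j hi hj
      simp only [Wt, if_neg (show ¬ (i:ℕ) < m0 by omega), if_neg (show ¬ (j:ℕ) < m0 by omega)]
    have hmem := H (fun i : Fin n => c ^ Wt m0 B (i:ℕ)) ha f hf
    rw [show (fun i : Fin n => (((fun i : Fin n => c ^ Wt m0 B (i:ℕ)) i : kˣ) : k) • X i)
        = (fun i : Fin n => (c:k) ^ Wt m0 B (i:ℕ) • X i) from
      funext fun i => by rw [Units.val_pow_eq_pow_val]] at hmem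
    rwa [scl_eq_sum_compc m0 B N f hdeg (c:k)] at hmem
  · have hz : compc m0 B f d = 0 := by
      rw [compc, Finset.filter_false_of_mem, Finset.sum_empty]
      intro u hu hdu
      exact hd (hdu ▸ hdeg u hu)
    rw [hz]; exact I.zero_mem

lemma compc_structure (r : ℕ) (hr1 : 1 ≤ r) (hrn : r ≤ n)
    (f : MvPolynomial (Fin n) k) (d : ℕ)
    (hne : compc (r-1) (f.totalDegree + 1) f d ≠ 0) :
    IsMonomialPoly (compc (r-1) (f.totalDegree + 1) f d) ∨
      IsSMonomialHomogeneousPoly r (compc (r-1) (f.totalDegree + 1) f d) := by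
  classical
  set m0 := r - 1 with hm0
  set T := f.totalDegree with hT
  set B := T + 1 with hB
  set p := compc m0 B f d with hp
  set s := p.support with hs
  -- all elements of the support agree below m0 and have equal blocksum
  have hkey : ∀ u ∈ s, ∀ u' ∈ s,
      (∀ j < m0, Uf u j = Uf u' j) ∧ blocksum m0 u = blocksum m0 u' := by
    intro u hu u' hu'
    rw [hs, hp, compc_support, Finset.mem_filter] at hu hu'
    exact degw_inj m0 B T (by omega) rfl u u'
      (le_totalDegree hu.1) (le_totalDegree hu'.1) (hu.2.trans hu'.2.symm)
  have hsne : s.Nonempty := by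
    rw [hs, Finset.nonempty_iff_ne_empty, Ne, support_eq_empty]; exact hne
  obtain ⟨u0, hu0⟩ := hsne
  by_cases hsing : ∀ u ∈ s, u = u0
  · left
    have hss : s = {u0} := Finset.eq_singleton_iff_unique_mem.mpr ⟨hu0, hsing⟩
    refine ⟨coeff u0 p, u0, mem_support_iff.mp hu0, ?_⟩
    conv_lhs => rw [← support_sum_monomial_coeff p]
    rw [← hs, hss, Finset.sum_singleton]
  · right
    push_neg at hsing
    obtain ⟨u1, hu1, hu1ne⟩ := hsing
    -- the common low part
    set e : Fin n →₀ ℕ := u0.filter (fun i => (i:ℕ) < m0) with he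
    have heapp : ∀ i : Fin n, e i = if (i:ℕ) < m0 then u0 i else 0 := fun i =>
      Finsupp.filter_apply _ u0 i
    have hlow : ∀ u ∈ s, ∀ i : Fin n, (i:ℕ) < m0 → u i = u0 i := by
      intro u hu i hi
      have := (hkey u hu u0 hu0).1 (i:ℕ) hi
      rwa [Uf_coe, Uf_coe] at this
    have hle : ∀ u ∈ s, e ≤ u := by
      intro u hu
      rw [Finsupp.le_def]
      intro i
      rw [heapp i]
      split
      · rw [hlow u hu i (by assumption)]
      · exact Nat.zero_le _
    have hsub : ∀ u ∈ s, e + (u - e) = u := fun u hu => add_tsub_cancel_of_le (hle u hu)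
    have hsubinj : ∀ u ∈ s, ∀ u' ∈ s, u - e = u' - e → u = u' := by
      intro u hu u' hu' h
      rw [← hsub u hu, ← hsub u' hu', h]
    set g : MvPolynomial (Fin n) k := ∑ u ∈ s, monomial (u - e) (coeff u p) with hg
    have hmul : monomial e (1:k) * g = p := by
      rw [hg, Finset.mul_sum]
      rw [Finset.sum_congr rfl (fun u hu => by
        rw [monomial_mul, one_mul, hsub u hu])]
      rw [hs]
      exact support_sum_monomial_coeff p
    have hgcoeff : ∀ u ∈ s, coeff (u - e) g = coeff u p := by
      intro u hu
      rw [hg, coeff_sum]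
      rw [Finset.sum_congr rfl (fun u' _ => coeff_monomial (u - e) (u' - e) (coeff u' p))]
      rw [Finset.sum_eq_single_of_mem u hu (fun u' hu' hne' => by
        rw [if_neg (fun hc => hne' (hsubinj u' hu' u hu hc))])]
      rw [if_pos rfl]
    have hgsupp : ∀ w ∈ g.support, ∃ u ∈ s, u - e = w := by
      intro w hw
      by_contra hc
      push_neg at hc
      have : coeff w g = 0 := by
        rw [hg, coeff_sum]
        refine Finset.sum_eq_zero fun u hu => ?_
        rw [coeff_monomial, if_neg (hc u hu)]
      exact mem_support_iff.mp hw this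
    -- blocksum positive
    set dB := blocksum m0 u0 with hdB
    have hbs : ∀ u ∈ s, blocksum m0 u = dB := fun u hu => (hkey u hu u0 hu0).2
    have hdBpos : 0 < dB := by
      rcases Nat.eq_zero_or_pos dB with h0 | h
      · exfalso
        apply hu1ne
        have hz : ∀ u ∈ s, ∀ i : Fin n, m0 ≤ (i:ℕ) → u i = 0 := by
          intro u hu i hi
          have hb := hbs u hu
          rw [h0, blocksum] at hb
          have := Finset.sum_eq_zero_iff.mp hb (i:ℕ) (Finset.mem_Ico.mpr ⟨hi, i.isLt⟩)
          rwa [Uf_coe] at this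
        ext i
        rcases Nat.lt_or_ge (i:ℕ) m0 with hi | hi
        · rw [hlow u1 hu1 i hi]
        · rw [hz u1 hu1 i hi, hz u0 hu0 i hi]
      · exact h
    have happ : ∀ u ∈ s, ∀ i : Fin n, (u - e) i = if (i:ℕ) < m0 then 0 else u i := by
      intro u hu i
      rw [Finsupp.tsub_apply, heapp i]
      split
      · rw [hlow u hu i (by assumption)]; omega
      · omega
    -- degree of u - e
    have hdeg : ∀ u ∈ s, (u - e).degree = dB := by
      intro u hu
      have hUf : ∀ j, Uf (u - e) j = if j < m0 then 0 else Uf u j := by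
        intro j
        by_cases hj : j < n
        · rw [show Uf (u - e) j = (u - e) ⟨j, hj⟩ from dif_pos hj, happ u hu]
          simp [Uf, hj]
        · simp [Uf, hj]
      rw [Finsupp.degree_apply, ← hbs u hu, blocksum]
      rw [Finset.sum_subset (Finset.subset_univ (u - e).support)
        (fun i _ hi => by rw [Finsupp.notMem_support_iff.mp hi])]
      have hconv : ∑ i : Fin n, (u - e) i = ∑ j ∈ Finset.range n, Uf (u - e) j := by
        rw [← Fin.sum_univ_eq_sum_range (Uf (u - e)) n]
        exact Finset.sum_congr rfl fun i _ => (Uf_coe _ i).symm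
      have h1 : ∑ j ∈ Finset.Ico 0 m0, Uf (u - e) j = 0 :=
        Finset.sum_eq_zero fun j hj => by rw [hUf, if_pos (Finset.mem_Ico.mp hj).2]
      have h2 : ∑ j ∈ Finset.Ico m0 n, Uf (u - e) j = ∑ j ∈ Finset.Ico m0 n, Uf u j :=
        Finset.sum_congr rfl fun j hj => by
          rw [hUf, if_neg (by have := (Finset.mem_Ico.mp hj).1; omega)]
      rw [hconv, Finset.range_eq_Ico,
        ← Finset.sum_Ico_consecutive _ (Nat.zero_le m0) (show m0 ≤ n by omega), h1, h2, zero_add]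
    have hhom : g.IsHomogeneous dB :=
      MvPolynomial.IsHomogeneous.sum s _ dB
        (fun u hu => isHomogeneous_monomial _ (hdeg u hu))
    have hg0 : coeff (u0 - e) g ≠ 0 := by
      rw [hgcoeff u0 hu0]; exact mem_support_iff.mp hu0
    have hg0' : g ≠ 0 := fun hz => hg0 (by rw [hz, coeff_zero])
    have hgnm : ¬ IsMonomialPoly g := by
      rintro ⟨c, w, hc, hgw⟩
      have h1 : coeff (u1 - e) g ≠ 0 := by
        rw [hgcoeff u1 hu1]; exact mem_support_iff.mp hu1
      rw [hgw, coeff_monomial] at hg0 h1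
      have e0 : w = u0 - e := by by_contra hh; rw [if_neg hh] at hg0; exact hg0 rfl
      have e1 : w = u1 - e := by by_contra hh; rw [if_neg hh] at h1; exact h1 rfl
      exact hu1ne (hsubinj u1 hu1 u0 hu0 (e1.symm.trans e0))
    have hvars : ∀ i ∈ g.vars, r ≤ (i:ℕ) + 1 := by
      intro i hi
      obtain ⟨w, hw, hiw⟩ := (mem_vars i).mp hi
      obtain ⟨u, hu, rfl⟩ := hgsupp w hw
      have hne0 : (u - e) i ≠ 0 := Finsupp.mem_support_iff.mp hiw
      by_contra hri
      rw [happ u hu i, if_pos (by omega)] at hne0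
      exact hne0 rfl
    exact ⟨monomial e 1, g, ⟨1, e, one_ne_zero, rfl⟩,
      ⟨hg0', ⟨dB, hdBpos, hhom⟩, hgnm, hvars⟩, hmul.symm⟩

lemma scl_block (r : ℕ) (hr1 : 1 ≤ r) (hrn : r ≤ n) (a : Fin n → kˣ)
    (ha : ∀ i j : Fin n, r - 1 ≤ (i:ℕ) → r - 1 ≤ (j:ℕ) → a i = a j)
    (g : MvPolynomial (Fin n) k) (dg : ℕ) (hhom : g.IsHomogeneous dg)
    (hv : ∀ i ∈ g.vars, r - 1 ≤ (i:ℕ)) :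
    aeval (fun i => (a i : k) • X i) g = ((a ⟨r-1, by omega⟩ : k) ^ dg) • g := by
  set β := a ⟨r-1, by omega⟩ with hβ
  conv_lhs => rw [← support_sum_monomial_coeff g]
  rw [map_sum]
  have hterm : ∀ u ∈ g.support, aeval (fun i => (a i : k) • X i) (monomial u (coeff u g))
      = ((β : k) ^ dg) • monomial u (coeff u g) := by
    intro u hu
    rw [scl_monomial]
    congr 1
    have hall : ∀ i ∈ u.support, (a i : k) = (β : k) := by
      intro i hi
      have hig : i ∈ g.vars := (mem_vars i).mpr ⟨u, hu, hi⟩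
      exact congrArg Units.val (ha i ⟨r-1, by omega⟩ (hv i hig) (by simp))
    rw [Finset.prod_congr rfl (fun i hi => by rw [hall i hi]),
      Finset.prod_pow_eq_pow_sum]
    congr 1
    have h1 := hhom (mem_support_iff.mp hu)
    have h2 : Finsupp.degree u = ∑ i ∈ u.support, u i := rfl
    rw [← h2, DFunLike.congr_fun Finsupp.degree_eq_weight_one u] at *
    exact h1
  rw [Finset.sum_congr rfl hterm, ← Finset.smul_sum, support_sum_monomial_coeff]

lemma scl_smul (r : ℕ) (hr1 : 1 ≤ r) (hrn : r ≤ n) (a : Fin n → kˣ)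
    (ha : ∀ i j : Fin n, r - 1 ≤ (i:ℕ) → r - 1 ≤ (j:ℕ) → a i = a j)
    (p : MvPolynomial (Fin n) k)
    (hp : IsMonomialPoly p ∨ ∃ s, r ≤ s ∧ IsSMonomialHomogeneousPoly s p) :
    ∃ c : k, aeval (fun i => (a i : k) • X i) p = c • p := by
  rcases hp with ⟨c0, u, hc0, rfl⟩ | ⟨s, hrs, M, g, ⟨c0, u, hc0, rfl⟩, ⟨hg0, ⟨dg, hdg, hhom⟩, hgnm, hgv⟩, rfl⟩
  · exact ⟨∏ i ∈ u.support, (a i : k) ^ u i, scl_monomial _ u c0⟩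
  · refine ⟨(∏ i ∈ u.support, (a i : k) ^ u i) * (a ⟨r-1, by omega⟩ : k) ^ dg, ?_⟩
    rw [map_mul, scl_monomial, scl_block r hr1 hrn a ha g dg hhom
      (fun i hi => by have := hgv i hi; omega)]
    rw [smul_mul_smul_comm]

/-- paper's Theorem 5.25. Let `k` be an infinite field, `1 ≤ r ≤ n`,
`l ≥ 2`, and `I` an ideal with `⟨X_1,…,X_n⟩^l ⊆ I ⊆ ⟨X_1,…,X_n⟩²`.  Then all diagonal
changes of variables `D` with `D(X_i) = a_i X_i` for `1 ≤ i ≤ r-1` and `D(X_i) = β X_i` for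
`r ≤ i ≤ n` (`a_i, β ∈ k^×`) map `I` into `I` if and only if
`I = ⟨X_1,…,X_n⟩^l + ⟨P_1,…,P_m⟩` where each `P_j` is a monomial or an `s_j`-monomial
homogeneous polynomial for some `s_j ≥ r`. -/
theorem stmt_12 (k : Type*) [Field k] [Infinite k] (n l r : ℕ)
    (hn : 1 ≤ n) (hl : 2 ≤ l) (hr1 : 1 ≤ r) (hrn : r ≤ n)
    (I : Ideal (MvPolynomial (Fin n) k))
    (hIl : (Ideal.span (Set.range (X : Fin n → MvPolynomial (Fin n) k))) ^ l ≤ I)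
    (hI2 : I ≤ (Ideal.span (Set.range (X : Fin n → MvPolynomial (Fin n) k))) ^ 2) :
    (∀ a : Fin n → kˣ,
        (∀ i j : Fin n, r - 1 ≤ (i : ℕ) → r - 1 ≤ (j : ℕ) → a i = a j) →
        ∀ g ∈ I, aeval (fun i => (a i : k) • X i) g ∈ I) ↔
    (∃ (m : ℕ) (P : Fin m → MvPolynomial (Fin n) k),
        I = (Ideal.span (Set.range (X : Fin n → MvPolynomial (Fin n) k))) ^ l
              + Ideal.span (Set.range P) ∧
        ∀ j, IsMonomialPoly (P j) ∨
          ∃ s, r ≤ s ∧ IsSMonomialHomogeneousPoly s (P j)) := by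
  classical
  constructor
  · -- hard direction
    intro H
    obtain ⟨S, hS⟩ := (isNoetherianRing_iff_ideal_fg _).mp
      (inferInstance : IsNoetherianRing (MvPolynomial (Fin n) k)) I
    set Q : Finset (MvPolynomial (Fin n) k) :=
      (S.biUnion fun f =>
        (Finset.range (f.totalDegree * (f.totalDegree + 1) ^ (r-1) + 1)).image
          fun d => compc (r-1) (f.totalDegree + 1) f d).erase 0 with hQ
    have hSI : ∀ f ∈ S, f ∈ I := fun f hf => hS ▸ Ideal.subset_span hf
    have hQmem : ∀ q ∈ Q, ∃ f ∈ S, ∃ d : ℕ, q = compc (r-1) (f.totalDegree + 1) f d ∧ q ≠ 0 := by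
      intro q hq
      rw [hQ, Finset.mem_erase, Finset.mem_biUnion] at hq
      obtain ⟨hq0, f, hf, hq'⟩ := hq
      obtain ⟨d, _, rfl⟩ := Finset.mem_image.mp hq'
      exact ⟨f, hf, d, rfl, hq0⟩
    have hQI : ∀ q ∈ Q, q ∈ I := by
      intro q hq
      obtain ⟨f, hf, d, rfl, -⟩ := hQmem q hq
      exact compc_mem r hr1 hrn I H f (hSI f hf) d
    have hQgood : ∀ q ∈ Q, IsMonomialPoly q ∨ ∃ s, r ≤ s ∧ IsSMonomialHomogeneousPoly s q := by
      intro q hq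
      obtain ⟨f, hf, d, rfl, hne⟩ := hQmem q hq
      rcases compc_structure r hr1 hrn f d hne with h | h
      · exact Or.inl h
      · exact Or.inr ⟨r, le_rfl, h⟩
    have hle2 : I ≤ Ideal.span (Q : Set (MvPolynomial (Fin n) k)) := by
      rw [← hS]
      rw [Ideal.span_le]
      intro f hf
      have hf' : f ∈ S := hf
      have hsum := sum_compc (r-1) (f.totalDegree + 1)
        (f.totalDegree * (f.totalDegree + 1) ^ (r-1)) f
        (fun u hu => degw_le (r-1) (f.totalDegree + 1) f.totalDegree le_rfl u
          (le_totalDegree hu))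
      rw [SetLike.mem_coe, ← hsum]
      refine Ideal.sum_mem _ fun d hd => ?_
      by_cases hz : compc (r-1) (f.totalDegree + 1) f d = 0
      · rw [hz]; exact Ideal.zero_mem _
      · refine Ideal.subset_span ?_
        rw [hQ, Finset.mem_coe, Finset.mem_erase]
        exact ⟨hz, Finset.mem_biUnion.mpr ⟨f, hf', Finset.mem_image.mpr ⟨d, hd, rfl⟩⟩⟩
    refine ⟨Q.card, fun j => ((Q.equivFin.symm j : Q) : MvPolynomial (Fin n) k), ?_, ?_⟩
    · have hrange : Set.range (fun j => ((Q.equivFin.symm j : Q) : MvPolynomial (Fin n) k))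
          = (Q : Set (MvPolynomial (Fin n) k)) := by
        ext x
        constructor
        · rintro ⟨j, rfl⟩; exact (Q.equivFin.symm j).2
        · intro hx; exact ⟨Q.equivFin ⟨x, hx⟩, by simp⟩
      rw [hrange]
      refine le_antisymm ?_ ?_
      · exact hle2.trans le_sup_right
      · exact sup_le hIl (Ideal.span_le.mpr hQI)
    · intro j
      exact hQgood _ (Q.equivFin.symm j).2
  · -- easy direction
    rintro ⟨m, P, hIeq, hgood⟩ a ha g hg
    set φ := (aeval (fun i => (a i : k) • X i) :
      MvPolynomial (Fin n) k →ₐ[k] MvPolynomial (Fin n) k) with hφ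
    have h1 : Ideal.map φ I ≤ I := by
      conv_lhs => rw [hIeq]
      rw [Submodule.add_eq_sup, Ideal.map_sup]
      refine sup_le ?_ ?_
      · refine le_trans ?_ hIl
        rw [Ideal.map_pow]
        refine Ideal.pow_right_mono ?_ l
        rw [Ideal.map_span, Ideal.span_le]
        rintro x ⟨y, ⟨i, rfl⟩, rfl⟩
        have : φ (X i) = C ((a i : k)) * X i := by
          rw [hφ]; simp [aeval_X, smul_eq_C_mul]
        rw [this]
        exact Ideal.mul_mem_left _ _ (Ideal.subset_span ⟨i, rfl⟩)
      · rw [Ideal.map_span, Ideal.span_le]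
        rintro x ⟨y, ⟨j, rfl⟩, rfl⟩
        have hPI : P j ∈ I := by
          rw [hIeq]
          exact le_sup_right (α := Ideal (MvPolynomial (Fin n) k))
            (Ideal.subset_span ⟨j, rfl⟩)
        obtain ⟨c, hc⟩ := scl_smul r hr1 hrn a ha (P j) (hgood j)
        rw [SetLike.mem_coe, show φ (P j) = c • P j from hc, smul_eq_C_mul]
        exact Ideal.mul_mem_left _ _ hPI
    exact h1 (Ideal.mem_map_of_mem φ hg)
end
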